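/- arXiv:2412.03849 — 8 statements merged into one kernel-verified Lean document; each statement's English description precedes it below -/
import Mathlib

section
/- In the group G = ⟨a, b, c | aba = b, cbc = b, ac = ca⟩ (the TRAAG on a triangle with directed edges [a,b⟩, [c,b⟩ and undirected edge [a,c]), if G is torsion-free and the subgroup generated by a and c is free abelian of rank 2, then the subgroup generated by a, c, and b² is free abelian of rank 3. -/
/-- In the group `G = ⟨a, b, c | aba = b, cbc = b, ac = ca⟩` (the TRAAG on a triangle with
directed edges `[a,b⟩`, `[c,b⟩` and undirected edge `[a,c]`), if `G` is torsion-free and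
`⟨a,c⟩ ≅ ℤ²`, then `⟨a, c, b²⟩` is free abelian of rank 3. -/
theorem stmt_0 {G : Type*} [Group G] (hTF : ∀ g : G, g ≠ 1 → ¬IsOfFinOrder g)
    (a b c : G) (h1 : a * b * a = b) (h2 : c * b * c = b) (h3 : a * c = c * a)
    (hZ2 : Function.Injective fun v : ℤ × ℤ => a ^ v.1 * c ^ v.2) :
    Commute a (b ^ 2) ∧ Commute c (b ^ 2) ∧
      Function.Injective fun v : ℤ × ℤ × ℤ => a ^ v.1 * c ^ v.2.1 * (b ^ 2) ^ v.2.2 := by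
  -- `b a b⁻¹ = a⁻¹` and `b c b⁻¹ = c⁻¹`
  have hba' : b * a = a⁻¹ * b := by
    have : a * (b * a) = a * (a⁻¹ * b) := by rw [← mul_assoc, h1]; group
    exact mul_left_cancel this
  have hba : b * a * b⁻¹ = a⁻¹ := by rw [hba']; group
  have hbc' : b * c = c⁻¹ * b := by
    have : c * (b * c) = c * (c⁻¹ * b) := by rw [← mul_assoc, h2]; group
    exact mul_left_cancel this
  have hbc : b * c * b⁻¹ = c⁻¹ := by rw [hbc']; group
  -- conjugation by b inverts powers of a and c
  have hconja : ∀ m : ℤ, b * a ^ m * b⁻¹ = a ^ (-m) := by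
    intro m
    rw [← conj_zpow, hba, ← zpow_neg_one, ← zpow_mul]
    ring_nf
  have hconjc : ∀ m : ℤ, b * c ^ m * b⁻¹ = c ^ (-m) := by
    intro m
    rw [← conj_zpow, hbc, ← zpow_neg_one, ← zpow_mul]
    ring_nf
  -- the commuting facts
  have hab2 : Commute a (b ^ 2) := by
    have : b ^ 2 * a * (b ^ 2)⁻¹ = a := by
      have : b ^ 2 * a * (b ^ 2)⁻¹ = b * (b * a * b⁻¹) * b⁻¹ := by
        rw [pow_two]; group
      rw [this, hba]
      have h' := hconja (-1)
      simpa using h'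
    have := this
    unfold Commute SemiconjBy
    calc a * b ^ 2 = (b ^ 2 * a * (b ^ 2)⁻¹) * b ^ 2 := by rw [this]
    _ = b ^ 2 * a := by group
  have hcb2 : Commute c (b ^ 2) := by
    have hkey : b ^ 2 * c * (b ^ 2)⁻¹ = c := by
      have : b ^ 2 * c * (b ^ 2)⁻¹ = b * (b * c * b⁻¹) * b⁻¹ := by
        rw [pow_two]; group
      rw [this, hbc]
      have h' := hconjc (-1)
      simpa using h'
    unfold Commute SemiconjBy
    calc c * b ^ 2 = (b ^ 2 * c * (b ^ 2)⁻¹) * b ^ 2 := by rw [hkey]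
    _ = b ^ 2 * c := by group
  have hac : Commute a c := h3
  refine ⟨hab2, hcb2, ?_⟩
  -- `a ≠ 1` and `b ≠ 1`
  have ha1 : a ≠ 1 := by
    intro h
    have : ((1 : ℤ), (0 : ℤ)) = ((0 : ℤ), (0 : ℤ)) := by
      apply hZ2
      simp [h]
    simpa using this
  have hb1 : b ≠ 1 := by
    intro h
    apply ha1
    have ha2 : a * a = 1 := by
      rw [h] at h1; simpa using h1
    by_contra hne
    have : IsOfFinOrder a := isOfFinOrder_iff_pow_eq_one.mpr
      ⟨2, by norm_num, by rw [pow_two]; exact ha2⟩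
    exact hTF a hne this
  -- kernel is trivial
  have key : ∀ m n k : ℤ, a ^ m * c ^ n * (b ^ 2) ^ k = 1 → m = 0 ∧ n = 0 ∧ k = 0 := by
    intro m n k h
    -- conjugate by b
    have hBconj : b * (b ^ 2) ^ k * b⁻¹ = (b ^ 2) ^ k := by group
    have hconj : a ^ (-m) * c ^ (-n) * (b ^ 2) ^ k = 1 := by
      have : b * (a ^ m * c ^ n * (b ^ 2) ^ k) * b⁻¹ = 1 := by rw [h]; group
      calc a ^ (-m) * c ^ (-n) * (b ^ 2) ^ k
          = (b * a ^ m * b⁻¹) * (b * c ^ n * b⁻¹) * (b * (b ^ 2) ^ k * b⁻¹) := by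
            rw [hconja, hconjc, hBconj]
        _ = b * (a ^ m * c ^ n * (b ^ 2) ^ k) * b⁻¹ := by group
        _ = 1 := this
    have heq : a ^ m * c ^ n = a ^ (-m) * c ^ (-n) := by
      have := h.trans hconj.symm
      exact mul_right_cancel this
    have h2mn : a ^ (2 * m) * c ^ (2 * n) = 1 := by
      have : a ^ m * (a ^ m * c ^ n) * c ^ n = a ^ m * (a ^ (-m) * c ^ (-n)) * c ^ n := by
        rw [heq]
      calc a ^ (2 * m) * c ^ (2 * n) = a ^ m * (a ^ m * c ^ n) * c ^ n := by
            rw [two_mul, two_mul, zpow_add, zpow_add]; group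
        _ = a ^ m * (a ^ (-m) * c ^ (-n)) * c ^ n := this
        _ = 1 := by group
    have hmn : (2 * m, 2 * n) = ((0 : ℤ), (0 : ℤ)) := by
      apply hZ2
      simpa using h2mn
    have hm : m = 0 := by
      have := hmn
      simp only [Prod.mk.injEq] at this
      omega
    have hn : n = 0 := by
      have := hmn
      simp only [Prod.mk.injEq] at this
      omega
    refine ⟨hm, hn, ?_⟩
    -- now `(b^2)^k = 1`, and `b` has infinite order
    have hbk : b ^ (2 * k) = 1 := by
      have : (b ^ 2) ^ k = 1 := by
        rw [hm, hn] at h; simpa using h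
      have h2' : ((2 : ℕ) : ℤ) * k = (2 : ℤ) * k := by norm_num
      rw [← h2', zpow_mul, zpow_natCast]
      exact this
    have hbinf : ¬ IsOfFinOrder b := hTF b hb1
    have hinj : Function.Injective fun n : ℤ => b ^ n :=
      injective_zpow_iff_not_isOfFinOrder.mpr hbinf
    have : 2 * k = 0 := by
      apply hinj
      simpa using hbk
    omega
  -- assemble the homomorphism from ℤ³ and conclude injectivity
  let ψ : Multiplicative ℤ × Multiplicative ℤ × Multiplicative ℤ →* G :=
    MonoidHom.noncommCoprod (zpowersHom G a)
      (MonoidHom.noncommCoprod (zpowersHom G c) (zpowersHom G (b ^ 2))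
        (fun m n => by simp only [zpowersHom_apply]; exact hcb2.zpow_zpow _ _))
      (fun m p => by
        simp only [zpowersHom_apply, MonoidHom.noncommCoprod_apply]
        exact (hac.zpow_zpow _ _).mul_right (hab2.zpow_zpow _ _))
  have hψ : ∀ x : Multiplicative ℤ × Multiplicative ℤ × Multiplicative ℤ,
      ψ x = a ^ x.1.toAdd * (c ^ x.2.1.toAdd * (b ^ 2) ^ x.2.2.toAdd) := fun x => rfl
  have hψinj : Function.Injective ψ := by
    rw [injective_iff_map_eq_one]
    intro x hx
    rw [hψ, ← mul_assoc] at hx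
    obtain ⟨hm, hn, hk⟩ := key _ _ _ hx
    obtain ⟨x1, x2, x3⟩ := x
    simp only [Prod.ext_iff]
    refine ⟨?_, ?_, ?_⟩ <;>
      [skip; skip; skip] <;>
      · simp only [Prod.fst, Prod.snd] at hm hn hk
        first
        | exact Multiplicative.toAdd.injective (by simpa using hm)
        | exact Multiplicative.toAdd.injective (by simpa using hn)
        | exact Multiplicative.toAdd.injective (by simpa using hk)
  rintro ⟨v1, v2, v3⟩ ⟨w1, w2, w3⟩ h
  simp only at h
  have h' : ψ (Multiplicative.ofAdd v1, Multiplicative.ofAdd v2, Multiplicative.ofAdd v3)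
      = ψ (Multiplicative.ofAdd w1, Multiplicative.ofAdd w2, Multiplicative.ofAdd w3) := by
    rw [hψ, hψ]
    simpa [mul_assoc] using h
  have := hψinj h'
  simp only [Prod.mk.injEq] at this
  obtain ⟨e1, e2, e3⟩ := this
  refine Prod.ext ?_ (Prod.ext ?_ ?_)
  · exact Multiplicative.ofAdd.injective e1
  · exact Multiplicative.ofAdd.injective e2
  · exact Multiplicative.ofAdd.injective e3
end

section
/- Let G be a torsion-free group containing elements a, b, c with relations b⁻¹ab = a⁻¹ (i.e. aba = b is replaced by the Klein relation on the pair), c⁻¹bc = b⁻¹, and ac = ca, such that ⟨a,c⟩ ≅ ℤ². Then b² ∉ ⟨a,c⟩. -/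
lemma sq_eq_one_tf {G : Type*} [Group G] (hTF : ∀ g : G, g ≠ 1 → ¬IsOfFinOrder g)
    {x : G} (h : x ^ 2 = 1) : x = 1 := by
  by_contra hx
  exact hTF x hx (isOfFinOrder_iff_pow_eq_one.mpr ⟨2, two_pos, h⟩)

/-- If a torsion-free group `G` contains `a, b, c` with `b⁻¹ab = a⁻¹`, `c⁻¹bc = b⁻¹`,
`ac = ca` and `⟨a,c⟩ ≅ ℤ²`, then `b² ∉ ⟨a,c⟩`. -/
theorem stmt_1 {G : Type*} [Group G] (hTF : ∀ g : G, g ≠ 1 → ¬IsOfFinOrder g)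
    (a b c : G) (h1 : b⁻¹ * a * b = a⁻¹) (h2 : c⁻¹ * b * c = b⁻¹) (h3 : a * c = c * a)
    (hZ2 : Function.Injective fun v : ℤ × ℤ => a ^ v.1 * c ^ v.2) :
    b ^ 2 ∉ Subgroup.closure ({a, c} : Set G) := by
  intro hmem
  have hac : Commute a c := h3
  have key : ∀ g ∈ Subgroup.closure ({a, c} : Set G), ∃ m n : ℤ, g = a ^ m * c ^ n := by
    intro g hg
    induction hg using Subgroup.closure_induction with
    | mem x hx =>
      simp only [Set.mem_insert_iff, Set.mem_singleton_iff] at hx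
      rcases hx with rfl | rfl
      · exact ⟨1, 0, by simp⟩
      · exact ⟨0, 1, by simp⟩
    | one => exact ⟨0, 0, by simp⟩
    | mul x y _ _ hx hy =>
      obtain ⟨m, n, rfl⟩ := hx
      obtain ⟨m', n', rfl⟩ := hy
      refine ⟨m + m', n + n', ?_⟩
      have h' : Commute (c ^ n) (a ^ m') := (hac.symm.zpow_zpow n m')
      rw [zpow_add, zpow_add]
      rw [mul_assoc, ← mul_assoc (c ^ n), h'.eq]
      group
    | inv x _ hx =>
      obtain ⟨m, n, rfl⟩ := hx
      refine ⟨-m, -n, ?_⟩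
      rw [mul_inv_rev, ← zpow_neg, ← zpow_neg]
      exact ((hac.zpow_zpow (-m) (-n)).eq).symm
  obtain ⟨m, n, hb2⟩ := key _ hmem
  -- conjugating b^2 by c inverts it
  have hconj : c⁻¹ * b ^ 2 * c = (b ^ 2)⁻¹ := by
    have : (c⁻¹ * b * c) ^ 2 = c⁻¹ * b ^ 2 * c := by
      simp [pow_two, mul_assoc]
    rw [← this, h2]; group
  have hcomm : c⁻¹ * b ^ 2 * c = b ^ 2 := by
    rw [hb2]
    have h1' : Commute c⁻¹ (a ^ m) := (hac.symm.inv_left).zpow_right m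
    calc c⁻¹ * (a ^ m * c ^ n) * c = (c⁻¹ * a ^ m) * (c ^ n * c) := by group
      _ = (a ^ m * c⁻¹) * (c ^ n * c) := by rw [h1'.eq]
      _ = a ^ m * c ^ n := by group
  have hb2inv : b ^ 2 = (b ^ 2)⁻¹ := by rw [← hconj, hcomm]
  have hb4 : (b ^ 2) ^ 2 = 1 := by
    rw [pow_two]; nth_rewrite 2 [hb2inv]; group
  have hb2one : b ^ 2 = 1 := sq_eq_one_tf hTF hb4
  have hb : b = 1 := sq_eq_one_tf hTF hb2one
  have ha2 : a ^ 2 = 1 := by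
    have : a = a⁻¹ := by rw [← h1, hb]; group
    rw [pow_two]; nth_rewrite 2 [this]; group
  have ha : a = 1 := sq_eq_one_tf hTF ha2
  have : ((1 : ℤ), (0 : ℤ)) = ((0 : ℤ), (0 : ℤ)) := hZ2 (by simp [ha])
  simp at this
end

section
/- Let G be a torsion-free group containing elements a, b, c with relations b⁻¹ab = a⁻¹, c⁻¹bc = b⁻¹, c⁻¹ac = a⁻¹, where ⟨a,b⟩ is a Klein bottle group (so b ∉ ⟨a⟩). Then b ∉ ⟨a, c²⟩ where ⟨a, c²⟩ ≅ ℤ² (a and c² commute). -/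
/-- Old Mathlib definition (removed since): a monoid is torsion-free if every
non-identity element has infinite order. -/
def Monoid.IsTorsionFree (G : Type*) [Monoid G] : Prop :=
  ∀ g : G, g ≠ 1 → ¬IsOfFinOrder g

/-- If a torsion-free group `G` contains `a, b, c` with `b⁻¹ab = a⁻¹`, `c⁻¹bc = b⁻¹`,
`c⁻¹ac = a⁻¹`, and `⟨a,b⟩` is a Klein bottle group, then `a` and `c²` commute,
`⟨a, c²⟩ ≅ ℤ²`, and `b ∉ ⟨a, c²⟩`. -/
theorem stmt_3 {G : Type*} [Group G] (hTF : Monoid.IsTorsionFree G)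
    (a b c : G) (h1 : b⁻¹ * a * b = a⁻¹) (h2 : c⁻¹ * b * c = b⁻¹) (h3 : c⁻¹ * a * c = a⁻¹)
    (hKlein : Function.Injective fun v : ℤ × ℤ => a ^ v.1 * b ^ v.2)
    (hbna : b ∉ Subgroup.closure ({a} : Set G)) :
    Commute a (c ^ 2) ∧
      (Function.Injective fun v : ℤ × ℤ => a ^ v.1 * (c ^ 2) ^ v.2) ∧
      b ∉ Subgroup.closure ({a, c ^ 2} : Set G) := by
  -- conjugation by c inverts all powers of a
  have key : ∀ n : ℤ, c⁻¹ * a ^ n * c = a ^ (-n) := by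
    intro n
    have : c⁻¹ * a ^ n * c = (c⁻¹ * a * c) ^ n := by
      have := (conj_zpow (i := n) (a := c⁻¹) (b := a)).symm
      simpa using this
    rw [this, h3, ← zpow_neg_one, ← zpow_mul]
    ring_nf
  -- a has infinite order
  have haio : ∀ m : ℤ, a ^ m = 1 → m = 0 := by
    intro m hm
    have := hKlein (a₁ := (m, 0)) (a₂ := (0, 0)) (by simp [hm])
    exact congrArg Prod.fst this
  -- b ≠ 1, hence c ≠ 1
  have hb1 : b ≠ 1 := fun h => hbna (h ▸ Subgroup.one_mem _)
  have hc1 : c ≠ 1 := by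
    intro h
    subst h
    simp only [inv_one, one_mul, mul_one] at h2
    have hbb : b ^ (2 : ℤ) = 1 := by
      have : b * b = 1 := by
        calc b * b = b * b⁻¹ := by rw [← h2]
        _ = 1 := mul_inv_cancel b
      simpa [zpow_two, pow_two] using this
    exact hb1 (by
      by_contra hb'
      exact hTF b hb' (isOfFinOrder_iff_zpow_eq_one.mpr ⟨2, by norm_num, hbb⟩))
  -- c has infinite order
  have hcio : ∀ n : ℤ, c ^ n = 1 → n = 0 := by
    intro n hn
    by_contra h
    exact hTF c hc1 (isOfFinOrder_iff_zpow_eq_one.mpr ⟨n, h, hn⟩)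
  -- commute
  have hac : a * c = c * a⁻¹ := by rw [← h3]; group
  have hainvc : a⁻¹ * c = c * a := by
    have := congrArg (fun x => a⁻¹ * x * a) hac
    simp only [mul_assoc] at this
    simp only [inv_mul_cancel_left, mul_inv_cancel, mul_one] at this
    rw [this]; group
  have hcomm : Commute a (c ^ 2) := by
    show a * c ^ 2 = c ^ 2 * a
    calc a * c ^ 2 = (a * c) * c := by rw [pow_two, mul_assoc]
    _ = c * (a⁻¹ * c) := by rw [hac, mul_assoc]
    _ = c * (c * a) := by rw [hainvc]
    _ = c ^ 2 * a := by rw [pow_two, mul_assoc]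
  -- conjugation by c fixes powers of c^2
  have keyd : ∀ n : ℤ, c⁻¹ * (c ^ 2) ^ n * c = (c ^ 2) ^ n := by
    intro n
    rw [← zpow_natCast c 2, ← zpow_mul]
    group
  -- a^m = (c^2)^n implies m = 0 ∧ n = 0
  have hmain : ∀ m n : ℤ, a ^ m = (c ^ 2) ^ n → m = 0 ∧ n = 0 := by
    intro m n h
    have h' : a ^ (-m) = (c ^ 2) ^ n := by
      rw [← key m, h, keyd]
    have hm : m = 0 := by
      have hmm : a ^ m = a ^ (-m) := h.trans h'.symm
      have : a ^ (2 * m) = 1 := by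
        rw [two_mul, zpow_add]
        nth_rewrite 2 [hmm]
        rw [← zpow_add]
        simp
      have := haio _ this
      omega
    refine ⟨hm, ?_⟩
    have hcn : (c ^ 2) ^ n = 1 := by rw [← h, hm, zpow_zero]
    rw [← zpow_natCast c 2, ← zpow_mul] at hcn
    have := hcio _ hcn
    simpa using this
  -- injectivity
  have hinj : Function.Injective fun v : ℤ × ℤ => a ^ v.1 * (c ^ 2) ^ v.2 := by
    rintro ⟨i, j⟩ ⟨k, l⟩ h
    simp only at h
    have e : a ^ (-k + i) = (c ^ 2) ^ (l + -j) := by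
      rw [zpow_add, zpow_add]
      calc a ^ (-k) * a ^ i
          = a ^ (-k) * (a ^ i * (c ^ 2) ^ j) * (c ^ 2) ^ (-j) := by group
      _ = a ^ (-k) * (a ^ k * (c ^ 2) ^ l) * (c ^ 2) ^ (-j) := by rw [h]
      _ = (c ^ 2) ^ l * (c ^ 2) ^ (-j) := by group
    obtain ⟨hm, hn⟩ := hmain _ _ e
    have hik : i = k := by omega
    have hjl : j = l := by omega
    rw [hik, hjl]
  refine ⟨hcomm, hinj, ?_⟩
  intro hmem
  -- every element of the closure has the form a^i (c^2)^j
  have hex : ∃ i j : ℤ, b = a ^ i * (c ^ 2) ^ j := by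
    clear h1 h2 hbna hKlein hb1
    induction hmem using Subgroup.closure_induction with
    | mem x hx =>
      rcases hx with rfl | rfl
      · exact ⟨1, 0, by simp⟩
      · exact ⟨0, 1, by simp⟩
    | one => exact ⟨0, 0, by simp⟩
    | mul x y hx hy ihx ihy =>
      obtain ⟨i, j, rfl⟩ := ihx
      obtain ⟨k, l, rfl⟩ := ihy
      refine ⟨i + k, j + l, ?_⟩
      have hc2 := ((hcomm.symm).zpow_zpow j k).eq
      rw [zpow_add, zpow_add, mul_assoc, ← mul_assoc ((c ^ 2) ^ j), hc2, mul_assoc, mul_assoc]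
    | inv x hx ihx =>
      obtain ⟨i, j, rfl⟩ := ihx
      refine ⟨-i, -j, ?_⟩
      rw [mul_inv_rev, ← zpow_neg, ← zpow_neg, ((hcomm.symm).zpow_zpow (-j) (-i)).eq]
  obtain ⟨i, j, hb⟩ := hex
  have e1 : b⁻¹ = a ^ (-i) * (c ^ 2) ^ j := by
    rw [← h2, hb]
    calc c⁻¹ * (a ^ i * (c ^ 2) ^ j) * c
        = (c⁻¹ * a ^ i * c) * (c⁻¹ * (c ^ 2) ^ j * c) := by group
    _ = a ^ (-i) * (c ^ 2) ^ j := by rw [key, keyd]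
  have e2 : b⁻¹ = a ^ (-i) * (c ^ 2) ^ (-j) := by
    rw [hb, mul_inv_rev, ← zpow_neg, ← zpow_neg, ((hcomm.symm).zpow_zpow (-j) (-i)).eq]
  have ej : (c ^ 2) ^ (2 * j) = 1 := by
    have hjj : (c ^ 2) ^ j = (c ^ 2) ^ (-j) := mul_left_cancel (e1.symm.trans e2)
    rw [two_mul, zpow_add]
    nth_rewrite 2 [hjj]
    rw [← zpow_add]
    simp
  rw [← zpow_natCast c 2, ← zpow_mul] at ej
  have hj : j = 0 := by
    have := hcio _ ej
    omega
  apply hbna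
  rw [Subgroup.mem_closure_singleton]
  exact ⟨i, by rw [hb, hj]; simp⟩
end

section
/- Let G = A *_H B be an amalgamated free product and let a ∈ A \ H. If a is conjugate in G to an element of H, then there exists w ∈ A \ H with w⁻¹aw ∈ H. -/
open Monoid

namespace Stmt7Aux

open Monoid.PushoutI Monoid.CoprodI

variable {ι : Type*} {H : Type*} {G : ι → Type*} [Group H] [∀ i, Group (G i)]
  {φ : ∀ i, H →* G i}

theorem key (hφ : ∀ i, Function.Injective (φ i)) (i : ι) (x : G i)
    (hx : x ∉ (φ i).range) (t : List (Σ j, G j))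
    (ht : ∀ l ∈ t, l.2 ∉ (φ l.1).range)
    (hchain : t.Chain' fun a b => a.1 ≠ b.1)
    (hhead : ∀ l ∈ t.head?, l.1 ≠ i) :
    ((t.map fun l => of (φ := φ) l.1 l.2).prod)⁻¹ * of (φ := φ) i x *
      (t.map fun l => of (φ := φ) l.1 l.2).prod ∉ (base φ).range := by
  intro hmem
  classical
  set σ : (Σ j, G j) → (Σ j, G j) := fun l => ⟨l.1, l.2⁻¹⟩ with hσ
  set L : List (Σ j, G j) := (t.map σ).reverse ++ ⟨i, x⟩ :: t with hL
  have hne : ∀ l ∈ L, l.2 ≠ 1 := by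
    intro l hl
    simp only [hL, List.mem_append, List.mem_reverse, List.mem_map, List.mem_cons] at hl
    rcases hl with ⟨a, ha, rfl⟩ | rfl | hl
    · intro h
      exact ht a ha (by rw [show a.2 = 1 from by simpa using inv_eq_one.mp h]; exact one_mem _)
    · intro h
      exact hx (by rw [show x = 1 from h]; exact one_mem _)
    · intro h
      exact ht l hl (by rw [h]; exact one_mem _)
  have hchainσ : (t.map σ).Chain' fun a b => a.1 ≠ b.1 := by
    unfold List.Chain'
    rw [List.isChain_map]
    exact hchain
  have hchainL : L.Chain' fun a b => a.1 ≠ b.1 := by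
    unfold List.Chain'
    rw [hL, List.isChain_append]
    refine ⟨List.isChain_reverse.mpr (hchainσ.imp fun a b h => h.symm),
      List.isChain_cons.mpr ⟨fun y hy => (hhead y hy).symm, hchain⟩, ?_⟩
    intro p hp q hq
    rw [List.getLast?_reverse, List.head?_map] at hp
    obtain ⟨y, hy, rfl⟩ := Option.map_eq_some_iff.mp (Option.mem_def.mp hp)
    simp only [List.head?_cons, Option.mem_def, Option.some.injEq] at hq
    subst hq
    exact hhead y hy
  let u : CoprodI.Word G := ⟨L, hne, hchainL⟩
  have hred : PushoutI.Reduced φ u := by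
    intro l hl
    simp only [u, hL, List.mem_append, List.mem_reverse, List.mem_map, List.mem_cons] at hl
    rcases hl with ⟨a, ha, rfl⟩ | rfl | hl
    · intro hr
      exact ht a ha (by simpa [σ] using inv_mem hr)
    · exact hx
    · exact ht l hl
  have hprod : ofCoprodI u.prod =
      ((t.map fun l => of (φ := φ) l.1 l.2).prod)⁻¹ * of (φ := φ) i x *
        (t.map fun l => of (φ := φ) l.1 l.2).prod := by
    have hof : ∀ (s : List (Σ j, G j)),
        ofCoprodI ((s.map fun l => CoprodI.of l.2).prod) =
          (s.map fun l => of (φ := φ) l.1 l.2).prod := by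
      intro s
      rw [map_list_prod, List.map_map]
      exact congrArg List.prod (List.map_congr_left fun l _ => by simp)
    have hA : ((t.map σ).reverse.map fun l => of (φ := φ) l.1 l.2).prod =
        ((t.map fun l => of (φ := φ) l.1 l.2).prod)⁻¹ := by
      rw [List.map_reverse, List.prod_reverse_noncomm, List.map_map, List.map_map]
      refine congrArg (fun z : PushoutI φ => z⁻¹) ?_
      exact congrArg List.prod (List.map_congr_left fun l _ => by simp [hσ])
    show ofCoprodI ((L.map fun l => CoprodI.of l.2).prod) = _
    rw [hL, List.map_append, List.prod_append, List.map_cons, List.prod_cons, map_mul, map_mul,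
      hof, hof, hA]
    simp [mul_assoc]
  have := hred.eq_empty_of_mem_range hφ (by rw [hprod]; exact hmem)
  have hLnil : L = [] := congrArg Word.toList this
  simp [hL] at hLnil

theorem decomp (hφ : ∀ i, Function.Injective (φ i)) (g : PushoutI φ) :
    ∃ (h : H) (t : List (Σ j, G j)),
      (∀ l ∈ t, l.2 ∉ (φ l.1).range) ∧ (t.Chain' fun a b => a.1 ≠ b.1) ∧
      g = base φ h * (t.map fun l => of (φ := φ) l.1 l.2).prod := by
  classical
  obtain ⟨d⟩ := PushoutI.NormalWord.transversal_nonempty φ hφ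
  set n := PushoutI.NormalWord.equiv (d := d) g with hn
  have hg : n.prod = g := (PushoutI.NormalWord.equiv (d := d)).left_inv g
  refine ⟨n.head, n.toList, ?_, n.chain_ne, ?_⟩
  · rintro ⟨j, y⟩ hl ⟨k, hk⟩
    have h1 : y ∈ d.set j := n.normalized j y hl
    have h2 : y ≠ 1 := n.ne_one _ hl
    obtain ⟨p, -, hp⟩ := (d.compl j).existsUnique y
    have e1 := hp ⟨⟨y, ⟨k, hk⟩⟩, ⟨1, d.one_mem _⟩⟩ (by simp)
    have e2 := hp ⟨⟨1, one_mem _⟩, ⟨y, h1⟩⟩ (by simp)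
    rw [← e2] at e1
    exact h2 (congrArg (fun q : ((φ j).range : Set (G j)) × (d.set j) => (q.1 : G j)) e1)
  · rw [← hg]
    show base φ n.head * ofCoprodI n.toWord.prod = _
    congr 1
    rw [Word.prod, map_list_prod, List.map_map]
    congr 1

end Stmt7Aux

set_option maxHeartbeats 1000000 in
open Stmt7Aux in
/-- In an amalgamated free product `G = A *_H B` (formalized as the pushout of injective
maps `φ i : H →* G i`), if `a` lies in a factor `A` but not in (the image of) `H`, and `a`
is conjugate in `G` into `H`, then `w⁻¹aw ∈ H` for some `w ∈ A \ H`. -/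
theorem stmt_7 {ι : Type*} {H : Type*} {G : ι → Type*} [Group H] [∀ i, Group (G i)]
    (φ : ∀ i, H →* G i) (hφ : ∀ i, Function.Injective (φ i)) (i : ι)
    (a : PushoutI φ)
    (haA : a ∈ (PushoutI.of (φ := φ) i).range)
    (haH : a ∉ (PushoutI.base φ).range)
    (hconj : ∃ g : PushoutI φ, g⁻¹ * a * g ∈ (PushoutI.base φ).range) :
    ∃ w : PushoutI φ, w ∈ (PushoutI.of (φ := φ) i).range ∧
      w ∉ (PushoutI.base φ).range ∧ w⁻¹ * a * w ∈ (PushoutI.base φ).range := by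
  obtain ⟨x, rfl⟩ := haA
  have hx : x ∉ (φ i).range := by
    rintro ⟨k, rfl⟩
    exact haH ⟨k, (PushoutI.of_apply_eq_base φ i k).symm⟩
  obtain ⟨g, hg⟩ := hconj
  obtain ⟨h, t, ht, hchain, rfl⟩ := decomp hφ g
  set x' : G i := (φ i h)⁻¹ * x * φ i h with hx'def
  have hx' : x' ∉ (φ i).range := by
    rintro ⟨k, hk⟩
    exact hx ⟨h * k * h⁻¹, by
      simp only [map_mul, map_inv, hk, hx'def]
      group⟩
  have hofx' : PushoutI.of (φ := φ) i x' = (PushoutI.base φ h)⁻¹ *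
      PushoutI.of (φ := φ) i x * PushoutI.base φ h := by
    rw [hx'def, map_mul, map_mul, map_inv, PushoutI.of_apply_eq_base φ]
  have hg' : ((t.map fun l => PushoutI.of (φ := φ) l.1 l.2).prod)⁻¹ *
      PushoutI.of (φ := φ) i x' * (t.map fun l => PushoutI.of (φ := φ) l.1 l.2).prod
      ∈ (PushoutI.base φ).range := by
    rw [hofx']
    simpa [mul_assoc] using hg
  match t, ht, hchain, hg' with
  | [], ht, hchain, hg' =>
    exact absurd hg' (key hφ i x' hx' [] (by simp) List.isChain_nil (by simp))
  | ⟨j, y⟩ :: rest, ht, hchain, hg' =>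
    obtain ⟨hhd, htl⟩ := List.isChain_cons.mp hchain
    by_cases hji : j = i
    · subst hji
      by_cases hmem : y⁻¹ * x' * y ∈ (φ j).range
      · obtain ⟨k, hk⟩ := hmem
        refine ⟨PushoutI.of (φ := φ) j (φ j h * y), ⟨_, rfl⟩, ?_, ?_⟩
        · rintro ⟨m, hm⟩
          rw [← PushoutI.of_apply_eq_base] at hm
          have h2 := PushoutI.of_injective hφ j hm
          exact ht ⟨j, y⟩ List.mem_cons_self
            ⟨h⁻¹ * m, by rw [map_mul, map_inv, h2]; group⟩
        · refine ⟨k, ?_⟩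
          rw [← PushoutI.of_apply_eq_base, hk, ← map_inv, ← map_mul, ← map_mul]
          congr 1
          rw [hx'def]
          group
      · refine absurd ?_ (key hφ j (y⁻¹ * x' * y) hmem rest
          (fun l hl => ht l (List.mem_cons_of_mem _ hl)) htl
          (fun l hl => (hhd l hl).symm))
        have heq : (((⟨j, y⟩ : Σ j, G j) :: rest).map
            fun l => PushoutI.of (φ := φ) l.1 l.2).prod =
            PushoutI.of (φ := φ) j y *
              (rest.map fun l => PushoutI.of (φ := φ) l.1 l.2).prod := by
          simp
        rw [heq] at hg'
        simpa [map_mul, map_inv, mul_assoc] using hg'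
    · exact absurd hg' (key hφ i x' hx' (⟨j, y⟩ :: rest) ht hchain
        (by rintro l hl; simp only [List.head?_cons, Option.mem_def, Option.some.injEq] at hl
            subst hl; exact hji))
end

section
/- Let G = A *_H B be an amalgamated free product and let a ∈ A \ H such that a is not conjugate in G into H. If w ∈ G satisfies w⁻¹aw ∈ A \ H, then w ∈ A. -/
open Monoid

namespace StmtAux

variable {ι : Type*} {H : Type*} {G : ι → Type*} [Group H] [∀ i, Group (G i)]
  {φ : ∀ i, H →* G i}

/-- product of a list of letters in the pushout -/
def pprod (φ : ∀ i, H →* G i) (l : List (Σ i, G i)) : PushoutI φ :=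
  (l.map fun p => PushoutI.of (φ := φ) p.1 p.2).prod

@[simp] lemma pprod_nil : pprod φ ([] : List (Σ i, G i)) = 1 := rfl

@[simp] lemma pprod_cons (p : (Σ i, G i)) (l : List (Σ i, G i)) :
    pprod φ (p :: l) = PushoutI.of (φ := φ) p.1 p.2 * pprod φ l := by
  simp [pprod]

lemma pprod_append (l m : List (Σ i, G i)) :
    pprod φ (l ++ m) = pprod φ l * pprod φ m := by simp [pprod]

lemma ofCoprodI_list_prod (l : List (Σ i, G i)) :
    PushoutI.ofCoprodI (φ := φ) (l.map fun p => CoprodI.of p.2).prod = pprod φ l := by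
  induction l with
  | nil => simp
  | cons p l ih =>
    simp only [List.map_cons, List.prod_cons, map_mul, ih, pprod_cons,
      PushoutI.ofCoprodI_of]

lemma ofCoprodI_word_prod (s : Monoid.CoprodI.Word G) :
    PushoutI.ofCoprodI (φ := φ) s.prod = pprod φ s.toList := by
  rw [CoprodI.Word.prod]
  exact ofCoprodI_list_prod s.toList

lemma pprod_revinv (l : List (Σ i, G i)) :
    pprod φ ((l.map fun p => (⟨p.1, p.2⁻¹⟩ : Σ i, G i)).reverse) = (pprod φ l)⁻¹ := by
  induction l with
  | nil => simp
  | cons p l ih =>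
    simp only [List.map_cons, List.reverse_cons, pprod_append, ih, pprod_cons, pprod_nil,
      mul_one, map_inv]
    rw [mul_inv_rev]

lemma idx_unique (hφ : ∀ i, Function.Injective (φ i)) {t₁ t₂ : Monoid.CoprodI.Word G}
    (h₁ : PushoutI.Reduced φ t₁) (h₂ : PushoutI.Reduced φ t₂)
    (heq : PushoutI.ofCoprodI (φ := φ) t₁.prod = PushoutI.ofCoprodI (φ := φ) t₂.prod) :
    t₁.toList.map Sigma.fst = t₂.toList.map Sigma.fst := by
  rcases PushoutI.NormalWord.transversal_nonempty φ hφ with ⟨d⟩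
  rcases PushoutI.Reduced.exists_normalWord_prod_eq d h₁ with ⟨w₁, hp₁, hm₁⟩
  rcases PushoutI.Reduced.exists_normalWord_prod_eq d h₂ with ⟨w₂, hp₂, hm₂⟩
  have hw : w₁ = w₂ := PushoutI.NormalWord.prod_injective (by rw [hp₁, hp₂, heq])
  rw [← hm₁, ← hm₂, hw]

lemma decomp (hφ : ∀ i, Function.Injective (φ i)) (i : ι) (w : PushoutI φ) :
    ∃ (u : G i) (s : Monoid.CoprodI.Word G), PushoutI.Reduced φ s ∧ s.fstIdx ≠ some i ∧
      w = PushoutI.of (φ := φ) i u * pprod φ s.toList := by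
  classical
  rcases PushoutI.NormalWord.transversal_nonempty φ hφ with ⟨d⟩
  set w' : PushoutI.NormalWord d := w • PushoutI.NormalWord.empty with hw'def
  have hw' : w'.prod = w := by
    rw [hw'def, PushoutI.NormalWord.prod_smul, PushoutI.NormalWord.prod_empty, mul_one]
  have hred : PushoutI.Reduced φ w'.toWord := by
    rintro ⟨j, g⟩ hg ⟨y, hy⟩
    have hset : g ∈ d.set j := w'.normalized j g hg
    have hne : g ≠ 1 := w'.toWord.ne_one _ hg
    have := (d.compl j).1
      (a₁ := (⟨⟨g, ⟨y, hy⟩⟩, ⟨1, d.one_mem j⟩⟩ : ((φ j).range : Set (G j)) × (d.set j)))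
      (a₂ := (⟨⟨1, one_mem _⟩, ⟨g, hset⟩⟩ : ((φ j).range : Set (G j)) × (d.set j)))
      (by simp)
    exact hne (by simpa using congr_arg (fun p => (p.1 : G j)) this)
  have hweq : w = PushoutI.base φ w'.head * pprod φ w'.toWord.toList := by
    rw [← hw', PushoutI.NormalWord.prod, ofCoprodI_word_prod]
  rcases hL : w'.toWord.toList with _ | ⟨⟨j, g⟩, rest⟩
  · refine ⟨φ i w'.head, CoprodI.Word.empty, ?_, ?_, ?_⟩
    · rintro g hg; simp [CoprodI.Word.empty] at hg
    · simp [CoprodI.Word.fstIdx, CoprodI.Word.empty]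
    · rw [hweq, hL, PushoutI.of_apply_eq_base φ i]
      simp [CoprodI.Word.empty]
  · by_cases hji : j = i
    · subst hji
      refine ⟨φ j w'.head * g,
        ⟨rest, fun l hl => w'.toWord.ne_one l (by rw [hL]; exact List.mem_cons_of_mem _ hl),
          by have := w'.toWord.chain_ne; rw [hL] at this; exact this.tail⟩, ?_, ?_, ?_⟩
      · intro l hl
        exact hred l (by rw [hL]; exact List.mem_cons_of_mem _ hl)
      · rw [CoprodI.Word.fstIdx_ne_iff]
        have := w'.toWord.chain_ne
        rw [hL, List.isChain_cons] at this
        intro l hl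
        exact (this.1 l hl)
      · rw [hweq]
        conv_lhs => rw [hL]
        show PushoutI.base φ w'.head * pprod φ (⟨j, g⟩ :: rest) =
          PushoutI.of (φ := φ) j (φ j w'.head * g) * pprod φ rest
        rw [pprod_cons, map_mul, PushoutI.of_apply_eq_base φ j, mul_assoc]
    · refine ⟨φ i w'.head, w'.toWord, hred, ?_, ?_⟩
      · rw [CoprodI.Word.fstIdx_ne_iff]
        intro l hl
        rw [hL] at hl
        simp only [List.head?_cons, Option.mem_def, Option.some.injEq] at hl
        subst hl
        exact fun h => hji h.symm
      · rw [hweq, PushoutI.of_apply_eq_base φ i]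

end StmtAux

open StmtAux

/-- In an amalgamated free product `G = A *_H B` (formalized as the pushout of injective
maps `φ i : H →* G i`), let `a ∈ A \ H` be not conjugate in `G` into `H`.
If `w⁻¹aw ∈ A \ H` for some `w ∈ G`, then `w ∈ A`. -/
theorem stmt_8 {ι : Type*} {H : Type*} {G : ι → Type*} [Group H] [∀ i, Group (G i)]
    (φ : ∀ i, H →* G i) (hφ : ∀ i, Function.Injective (φ i)) (i : ι)
    (a : PushoutI φ)
    (haA : a ∈ (PushoutI.of (φ := φ) i).range)
    (haH : a ∉ (PushoutI.base φ).range)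
    (hnconj : ¬ ∃ g : PushoutI φ, g⁻¹ * a * g ∈ (PushoutI.base φ).range)
    (w : PushoutI φ)
    (hw : w⁻¹ * a * w ∈ (PushoutI.of (φ := φ) i).range ∧
      w⁻¹ * a * w ∉ (PushoutI.base φ).range) :
    w ∈ (PushoutI.of (φ := φ) i).range := by
  classical
  obtain ⟨u, s, hsred, hsidx, rfl⟩ := decomp hφ i w
  obtain ⟨x, hx⟩ := haA
  set x' : G i := u⁻¹ * x * u with hx'def
  have hx' : PushoutI.of (φ := φ) i x' =
      (PushoutI.of (φ := φ) i u)⁻¹ * a * PushoutI.of (φ := φ) i u := by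
    rw [← hx, hx'def, map_mul, map_mul, map_inv]
  have hx'r : x' ∉ (φ i).range := by
    rintro ⟨y, hy⟩
    exact hnconj ⟨PushoutI.of (φ := φ) i u,
      ⟨y, by rw [← PushoutI.of_apply_eq_base φ i, hy, hx']⟩⟩
  have hconj : (PushoutI.of (φ := φ) i u * pprod φ s.toList)⁻¹ * a *
      (PushoutI.of (φ := φ) i u * pprod φ s.toList) =
      (pprod φ s.toList)⁻¹ * PushoutI.of (φ := φ) i x' * pprod φ s.toList := by
    rw [hx']; group
  obtain ⟨z, hz⟩ := hw.1
  have hzr : z ∉ (φ i).range := by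
    rintro ⟨y, hy⟩
    exact hw.2 ⟨y, by rw [← PushoutI.of_apply_eq_base φ i, hy, hz]⟩
  -- the conjugated reduced word
  have hhead : ∀ l ∈ s.toList.head?, i ≠ l.1 := CoprodI.Word.fstIdx_ne_iff.1 hsidx
  set L : List (Σ j, G j) :=
    (s.toList.map fun p => (⟨p.1, p.2⁻¹⟩ : Σ j, G j)).reverse ++ ⟨i, x'⟩ :: s.toList with hLdef
  have hLmem : ∀ l ∈ L, Sigma.snd l ∉ (φ l.1).range := by
    intro l hl
    rw [hLdef, List.mem_append, List.mem_reverse, List.mem_map] at hl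
    rcases hl with ⟨p, hp, rfl⟩ | hl
    · simpa using hsred p hp
    · rcases List.mem_cons.1 hl with rfl | hl
      · exact hx'r
      · exact hsred l hl
  have hchain2 : (⟨i, x'⟩ :: s.toList).IsChain (fun a b : Σ j, G j => a.1 ≠ b.1) := by
    rw [List.isChain_cons]
    exact ⟨hhead, s.chain_ne⟩
  have hchain : L.IsChain (fun a b : Σ j, G j => a.1 ≠ b.1) := by
    rw [hLdef, List.isChain_append]
    refine ⟨?_, hchain2, ?_⟩
    · rw [List.isChain_reverse, List.isChain_map]
      exact s.chain_ne.imp (fun a b h => by exact fun h' => h h'.symm)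
    · intro p hp q hq
      rw [List.getLast?_reverse] at hp
      rw [List.head?_map] at hp
      rcases Option.map_eq_some_iff.1 hp with ⟨p', hp', rfl⟩
      simp only [List.head?_cons, Option.mem_def, Option.some.injEq] at hq
      subst hq
      exact fun h => hhead p' hp' h.symm
  set t : Monoid.CoprodI.Word G :=
    ⟨L, fun l hl h1 => hLmem l hl (h1 ▸ one_mem _), hchain⟩ with htdef
  have htred : PushoutI.Reduced φ t := hLmem
  have hz1 : z ≠ 1 := fun h1 => hzr (h1 ▸ one_mem _)
  set t2 : Monoid.CoprodI.Word G :=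
    ⟨[⟨i, z⟩],
      by intro l hl; rw [List.mem_singleton] at hl; subst hl; exact hz1,
      List.isChain_singleton _⟩ with ht2def
  have ht2red : PushoutI.Reduced φ t2 := by
    intro l hl
    rw [ht2def] at hl
    rw [List.mem_singleton] at hl
    subst hl
    exact hzr
  have hprodt : PushoutI.ofCoprodI (φ := φ) t.prod = PushoutI.of (φ := φ) i z := by
    rw [ofCoprodI_word_prod]
    show pprod φ L = _
    rw [hLdef, pprod_append, pprod_revinv, pprod_cons]
    rw [hz, hconj, mul_assoc]
  have hidx := idx_unique hφ htred ht2red (by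
    rw [hprodt, ofCoprodI_word_prod]
    show _ = pprod φ [⟨i, z⟩]
    simp)
  have hlen := congr_arg List.length hidx
  simp only [htdef, hLdef, List.length_map, List.length_append, List.length_reverse,
    List.length_cons, List.length_singleton, ht2def] at hlen
  simp only [List.length_nil] at hlen
  have hnil : s.toList = [] := List.length_eq_zero_iff.1 (by omega)
  rw [hnil, pprod_nil, mul_one]
  exact ⟨u, rfl⟩
end

section
/- Let G = ⟨x, y | x^{2p} = y^q⟩ with p ≥ 1, q ≥ 3, gcd(2p, q) = 1, and z_i = [x^p, (yxy)^i] for i = 1, …, n. Then the set {z_1, …, z_n} freely generates a free subgroup of rank n of G, and the subgroup ⟨x^p, z_1, …, z_n⟩ is isomorphic to the TRAAG of the sink star S_n, namely ⟨a, b_1, …, b_n | b_i a b_i = a for all i⟩. -/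
/-- The torus knot group `⟨x, y | x^{2p} = y^q⟩` as a presented group. -/
def torusKnotRels (p q : ℕ) : Set (FreeGroup (Fin 2)) :=
  {FreeGroup.of 0 ^ (2 * p) * (FreeGroup.of 1 ^ q)⁻¹}

/-- The defining relators of the TRAAG of the sink star `S_n`:
central vertex `none`, end vertices `some i`, and relators `b_i a b_i a⁻¹`
(from the relations `b_i a b_i = a`). -/
def sinkStarRels (n : ℕ) : Set (FreeGroup (Option (Fin n))) :=
  {r | ∃ i : Fin n, r = FreeGroup.of (some i) * FreeGroup.of none *
        FreeGroup.of (some i) * (FreeGroup.of none)⁻¹}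

namespace TKProof

/-- Latttice of integer pairs with odd coordinate sum. -/
abbrev Latt : Type := {v : ℤ × ℤ // Odd (v.1 + v.2)}

def sig0 : Equiv.Perm (ℤ × ℤ) where
  toFun v := (v.1 + 2 * v.2, v.2)
  invFun v := (v.1 - 2 * v.2, v.2)
  left_inv v := by simp
  right_inv v := by simp

def tau0 : Equiv.Perm (ℤ × ℤ) where
  toFun v := (v.1, v.2 + 2 * v.1)
  invFun v := (v.1, v.2 - 2 * v.1)
  left_inv v := by simp
  right_inv v := by simp

lemma sig0_parity (v : ℤ × ℤ) : Odd (v.1 + v.2) ↔ Odd ((sig0 v).1 + (sig0 v).2) := by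
  simp only [sig0, Equiv.coe_fn_mk, Int.odd_iff]
  omega

lemma tau0_parity (v : ℤ × ℤ) : Odd (v.1 + v.2) ↔ Odd ((tau0 v).1 + (tau0 v).2) := by
  simp only [tau0, Equiv.coe_fn_mk, Int.odd_iff]
  omega

def sig : Equiv.Perm Latt := sig0.subtypePerm (fun v => (sig0_parity v).symm)

def tau : Equiv.Perm Latt := tau0.subtypePerm (fun v => (tau0_parity v).symm)

lemma sig_apply (v : Latt) : ((sig v : Latt) : ℤ × ℤ) = ((v : ℤ × ℤ).1 + 2 * (v : ℤ × ℤ).2, (v : ℤ × ℤ).2) := rfl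

lemma tau_apply (v : Latt) : ((tau v : Latt) : ℤ × ℤ) = ((v : ℤ × ℤ).1, (v : ℤ × ℤ).2 + 2 * (v : ℤ × ℤ).1) := rfl

lemma sig_inv_apply (v : Latt) :
    ((sig⁻¹ v : Latt) : ℤ × ℤ) = ((v : ℤ × ℤ).1 - 2 * (v : ℤ × ℤ).2, (v : ℤ × ℤ).2) := rfl

lemma tau_inv_apply (v : Latt) :
    ((tau⁻¹ v : Latt) : ℤ × ℤ) = ((v : ℤ × ℤ).1, (v : ℤ × ℤ).2 - 2 * (v : ℤ × ℤ).1) := rfl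

lemma sig_zpow (k : ℤ) (v : Latt) :
    (((sig ^ k) v : Latt) : ℤ × ℤ) = ((v : ℤ × ℤ).1 + 2 * k * (v : ℤ × ℤ).2, (v : ℤ × ℤ).2) := by
  induction k using Int.induction_on with
  | zero => simp
  | succ k ih =>
      have h : sig ^ ((k : ℤ) + 1) = sig * sig ^ (k : ℤ) := by
        rw [← zpow_one_add]; ring_nf
      rw [h, Equiv.Perm.mul_apply, sig_apply, ih]
      simp only [Prod.mk.injEq]
      exact ⟨by ring, trivial⟩
  | pred k ih =>
      have h : sig ^ (-(k : ℤ) - 1) = sig⁻¹ * sig ^ (-(k : ℤ)) := by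
        rw [← zpow_neg_one, ← zpow_add]; ring_nf
      rw [h, Equiv.Perm.mul_apply, sig_inv_apply, ih]
      simp only [Prod.mk.injEq]
      exact ⟨by ring, trivial⟩

lemma tau_zpow (k : ℤ) (v : Latt) :
    (((tau ^ k) v : Latt) : ℤ × ℤ) = ((v : ℤ × ℤ).1, (v : ℤ × ℤ).2 + 2 * k * (v : ℤ × ℤ).1) := by
  induction k using Int.induction_on with
  | zero => simp
  | succ k ih =>
      have h : tau ^ ((k : ℤ) + 1) = tau * tau ^ (k : ℤ) := by
        rw [← zpow_one_add]; ring_nf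
      rw [h, Equiv.Perm.mul_apply, tau_apply, ih]
      simp only [Prod.mk.injEq]
      exact ⟨trivial, by ring⟩
  | pred k ih =>
      have h : tau ^ (-(k : ℤ) - 1) = tau⁻¹ * tau ^ (-(k : ℤ)) := by
        rw [← zpow_neg_one, ← zpow_add]; ring_nf
      rw [h, Equiv.Perm.mul_apply, tau_inv_apply, ih]
      simp only [Prod.mk.injEq]
      exact ⟨trivial, by ring⟩

/-- points where the first coordinate dominates -/
def U : Set Latt := {v | |(v : ℤ × ℤ).2| < |(v : ℤ × ℤ).1|}

def V : Set Latt := {v | |(v : ℤ × ℤ).1| < |(v : ℤ × ℤ).2|}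

lemma abs_ne (v : Latt) : |(v : ℤ × ℤ).1| ≠ |(v : ℤ × ℤ).2| := by
  intro h
  have hv := v.2
  rw [Int.odd_iff] at hv
  rcases abs_eq_abs.mp h with h' | h' <;> omega

lemma not_mem_U {v : Latt} (h : v ∉ U) : v ∈ V :=
  lt_of_le_of_ne (not_lt.mp h) (abs_ne v)

lemma not_mem_V {v : Latt} (h : v ∉ V) : v ∈ U :=
  lt_of_le_of_ne (not_lt.mp h) (Ne.symm (abs_ne v))

lemma U_V_disj (v : Latt) (hU : v ∈ U) (hV : v ∈ V) : False := by
  simp only [U, V, Set.mem_setOf_eq] at hU hV; omega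

lemma sanov_sig {k : ℤ} (hk : k ≠ 0) {v : Latt} (hv : v ∈ V) : (sig ^ k) v ∈ U := by
  simp only [U, V, Set.mem_setOf_eq] at hv ⊢
  rw [sig_zpow]
  set a := (v : ℤ × ℤ).1; set b := (v : ℤ × ℤ).2
  dsimp only
  have h1 : |2 * k * b| - |a| ≤ |a + 2 * k * b| := by
    have := abs_sub_abs_le_abs_sub (2 * k * b) (-a)
    simp only [sub_neg_eq_add, abs_neg] at this
    rw [add_comm (2 * k * b) a] at this
    linarith [this]
  have h2 : |2 * k * b| = 2 * |k| * |b| := by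
    rw [abs_mul, abs_mul]; simp
  have h3 : 1 ≤ |k| := Int.one_le_abs (by omega)
  have hb : 0 ≤ |b| := abs_nonneg b
  nlinarith

lemma sanov_tau {k : ℤ} (hk : k ≠ 0) {v : Latt} (hv : v ∈ U) : (tau ^ k) v ∈ V := by
  simp only [U, V, Set.mem_setOf_eq] at hv ⊢
  rw [tau_zpow]
  set a := (v : ℤ × ℤ).1; set b := (v : ℤ × ℤ).2
  dsimp only
  have h1 : |2 * k * a| - |b| ≤ |b + 2 * k * a| := by
    have := abs_sub_abs_le_abs_sub (2 * k * a) (-b)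
    simp only [sub_neg_eq_add, abs_neg] at this
    rw [add_comm (2 * k * a) b] at this
    linarith [this]
  have h2 : |2 * k * a| = 2 * |k| * |a| := by
    rw [abs_mul, abs_mul]; simp
  have h3 : 1 ≤ |k| := Int.one_le_abs (by omega)
  have hb : 0 ≤ |a| := abs_nonneg a
  nlinarith

end TKProof

namespace TKProof2
open TKProof

def act : FreeGroup Bool →* Equiv.Perm Latt := FreeGroup.lift (fun b => cond b tau sig)

def zeta (k : ℕ) : FreeGroup Bool := ((FreeGroup.of false) ^ k)⁻¹ * (FreeGroup.of true) ^ k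

lemma act_zeta (k : ℕ) : act (zeta k) = (sig ^ k)⁻¹ * tau ^ k := by
  simp [act, zeta]

theorem zeta_free (n : ℕ) [Nontrivial (Fin n)] :
    Function.Injective (FreeGroup.lift (fun i : Fin n => zeta (i.1 + 1))) := by
  letI : MulAction (FreeGroup Bool) Latt := MulAction.compHom _ act
  have smul_def : ∀ (g : FreeGroup Bool) (v : Latt), g • v = act g v := fun _ _ => rfl
  apply FreeGroup.injective_lift_of_ping_pong _
    (fun i : Fin n => {v : Latt | (sig ^ (i.1 + 1)) v ∈ V})
    (fun i : Fin n => {v : Latt | (tau ^ (i.1 + 1)) v ∈ U})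
  · -- nonempty
    intro i
    refine ⟨(sig ^ (i.1 + 1))⁻¹ ⟨(1, 2), by decide⟩, ?_⟩
    simp only [Set.mem_setOf_eq, Equiv.Perm.coe_inv, Equiv.apply_symm_apply]
    show |(1 : ℤ)| < |(2 : ℤ)|
    norm_num
  · -- X pairwise disjoint
    intro i j hij
    simp only [Function.onFun]
    rw [Set.disjoint_left]
    intro v hiv hjv
    simp only [Set.mem_setOf_eq] at hiv hjv
    have hne : ((j.1 + 1 : ℕ) : ℤ) - ((i.1 + 1 : ℕ) : ℤ) ≠ 0 := by
      have := (Fin.val_injective.ne hij)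
      intro h; apply this; omega
    have e : (sig ^ (j.1 + 1 : ℕ)) v
        = (sig ^ (((j.1 + 1 : ℕ) : ℤ) - ((i.1 + 1 : ℕ) : ℤ))) ((sig ^ (i.1 + 1 : ℕ)) v) := by
      rw [← zpow_natCast sig (i.1 + 1), ← zpow_natCast sig (j.1 + 1),
        ← Equiv.Perm.mul_apply, ← zpow_add]
      congr 1
      ring
    rw [e] at hjv
    exact U_V_disj _ (sanov_sig hne hiv) hjv
  · -- Y pairwise disjoint
    intro i j hij
    simp only [Function.onFun]
    rw [Set.disjoint_left]
    intro v hiv hjv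
    simp only [Set.mem_setOf_eq] at hiv hjv
    have hne : ((j.1 + 1 : ℕ) : ℤ) - ((i.1 + 1 : ℕ) : ℤ) ≠ 0 := by
      have := (Fin.val_injective.ne hij)
      intro h; apply this; omega
    have e : (tau ^ (j.1 + 1 : ℕ)) v
        = (tau ^ (((j.1 + 1 : ℕ) : ℤ) - ((i.1 + 1 : ℕ) : ℤ))) ((tau ^ (i.1 + 1 : ℕ)) v) := by
      rw [← zpow_natCast tau (i.1 + 1), ← zpow_natCast tau (j.1 + 1),
        ← Equiv.Perm.mul_apply, ← zpow_add]
      congr 1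
      ring
    rw [e] at hjv
    exact U_V_disj _ hjv (sanov_tau hne hiv)
  · -- X i disjoint Y j
    intro i j
    rw [Set.disjoint_left]
    intro v hiv hjv
    simp only [Set.mem_setOf_eq] at hiv hjv
    have e : v = (sig ^ (-((i.1 + 1 : ℕ) : ℤ))) ((sig ^ (i.1 + 1 : ℕ)) v) := by
      rw [← zpow_natCast sig (i.1 + 1), ← Equiv.Perm.mul_apply, ← zpow_add,
        neg_add_cancel, zpow_zero, Equiv.Perm.coe_one, id_eq]
    have hvU : v ∈ U := by
      rw [e]
      exact sanov_sig (by omega) hiv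
    have hV' : (tau ^ ((j.1 + 1 : ℕ) : ℤ)) v ∈ V := sanov_tau (by omega) hvU
    rw [zpow_natCast] at hV'
    exact U_V_disj _ hjv hV'
  · -- hX
    intro i
    rintro v ⟨w, hw, rfl⟩
    show (sig ^ (i.1 + 1)) (zeta (i.1 + 1) • w) ∈ V
    rw [smul_def, act_zeta, Equiv.Perm.mul_apply, Equiv.Perm.coe_inv, Equiv.apply_symm_apply]
    exact not_mem_U hw
  · -- hY
    intro i
    rintro v ⟨w, hw, rfl⟩
    show (tau ^ (i.1 + 1)) ((fun i : Fin n => zeta (i.1 + 1))⁻¹ i • w) ∈ U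
    rw [Pi.inv_apply, smul_def, map_inv, act_zeta, mul_inv_rev, inv_inv,
      Equiv.Perm.mul_apply, Equiv.Perm.coe_inv, Equiv.apply_symm_apply]
    exact not_mem_V hw

end TKProof2

namespace TKProof2

theorem zeta_free' (n : ℕ) :
    Function.Injective (FreeGroup.lift (fun i : Fin n => zeta (i.1 + 1))) := by
  match n with
  | 0 =>
      have htriv : ∀ g : FreeGroup (Fin 0), g = 1 := by
        intro g
        induction g using FreeGroup.induction_on with
        | C1 => rfl
        | of x => exact x.elim0
        | inv_of x _ => exact x.elim0
        | mul x y hx hy => rw [hx, hy, one_mul]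
      intro a b _
      rw [htriv a, htriv b]
  | (m + 1) =>
      have hbig := zeta_free (m + 3)
      set e : Fin (m + 1) → Fin (m + 3) := Fin.castLE (by omega) with he
      set r : Fin (m + 3) → Fin (m + 1) := fun j => ⟨min j.1 m, by omega⟩ with hr
      have hcomp : (FreeGroup.lift (fun i : Fin (m + 1) => zeta (i.1 + 1)))
          = (FreeGroup.lift (fun i : Fin (m + 3) => zeta (i.1 + 1))).comp (FreeGroup.map e) := by
        ext i
        simp [he]
      have hmapinj : Function.Injective (FreeGroup.map e (β := Fin (m + 3))) := by
        have hli : Function.LeftInverse (FreeGroup.map r) (FreeGroup.map e) := by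
          intro g
          rw [FreeGroup.map.comp]
          have : (r ∘ e) = id := by
            funext i
            simp only [Function.comp_apply, hr, he, Fin.castLE, id_eq]
            ext
            simp only [Fin.val_mk]
            omega
          rw [this, FreeGroup.map.id]
        exact hli.injective
      rw [hcomp]
      exact hbig.comp hmapinj

end TKProof2

namespace WordPP
open Monoid.CoprodI Monoid.CoprodI.Word

variable {ι : Type*} {M : ι → Type*} [∀ i, Group (M i)] [DecidableEq ι] [∀ i, DecidableEq (M i)]

lemma fstIdx_of_toList_cons {i : ι} {m : M i} {l} {w : Word M}
    (h : w.toList = ⟨i, m⟩ :: l) : w.fstIdx = some i := by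
  simp [fstIdx, h]

lemma smul_toList_of_fstIdx_ne {i : ι} (m : M i) (hm : m ≠ 1) (w : Word M)
    (h : w.fstIdx ≠ some i) :
    (Monoid.CoprodI.of m • w).toList = ⟨i, m⟩ :: w.toList := by
  rw [of_smul_def, equivPair_eq_of_fstIdx_ne h]
  simp only [mul_one]
  rw [rcons, dif_neg hm]
  rfl

lemma exists_decomp {i : ι} {m' : M i} {l} (w : Word M) (h : w.toList = ⟨i, m'⟩ :: l) :
    ∃ (wt : Word M) (hf : wt.fstIdx ≠ some i) (hm' : m' ≠ 1),
      w = cons m' wt hf hm' ∧ wt.toList = l := by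
  have hm' : m' ≠ 1 := w.ne_one ⟨i, m'⟩ (h ▸ List.mem_cons_self)
  have hch : (⟨i, m'⟩ :: l).IsChain (fun a b => a.1 ≠ b.1) := h ▸ w.chain_ne
  have hne : ∀ x ∈ l, x.2 ≠ 1 := by
    intro x hx
    exact w.ne_one x (h ▸ List.mem_cons_of_mem _ hx)
  refine ⟨⟨l, fun x hx => hne x hx, hch.tail⟩, ?_, hm', ?_, rfl⟩
  · rw [fstIdx_ne_iff]
    intro y hy
    have := (List.isChain_cons.mp hch).1 y hy
    exact fun hiy => this (hiy ▸ rfl)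
  · apply Word.ext
    simp [cons, h]

lemma smul_toList_cons {i : ι} (m m' : M i) {l} (w : Word M) (h : w.toList = ⟨i, m'⟩ :: l) :
    (Monoid.CoprodI.of m • w).toList = if m * m' = 1 then l else ⟨i, m * m'⟩ :: l := by
  obtain ⟨wt, hf, hm', rfl, hl⟩ := exists_decomp w h
  have hep : equivPair i (cons m' wt hf hm') = ⟨m', wt, hf⟩ := by
    rw [Equiv.apply_eq_iff_eq_symm_apply, equivPair_symm, rcons, dif_neg hm']
  rw [of_smul_def, hep]
  by_cases h1 : m * m' = 1
  · rw [if_pos h1]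
    show (rcons _).toList = l
    rw [rcons, dif_pos h1]
    exact hl
  · rw [if_neg h1]
    show (rcons _).toList = _
    rw [rcons, dif_neg h1]
    simp [cons, hl]

end WordPP

namespace WordB
open Monoid.CoprodI Monoid.CoprodI.Word WordPP

variable {M : Bool → Type*} [∀ b, Group (M b)] [∀ b, DecidableEq (M b)]

lemma smul_ttt (a1 : M true) (a2 : M false) (a3 : M true)
    (h1 : a1 ≠ 1) (h2 : a2 ≠ 1) (h3 : a3 ≠ 1) (w : Word M)
    (hw : ∀ l0, w.toList ≠ ⟨true, a3⁻¹⟩ :: l0) :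
    ∃ l, ((Monoid.CoprodI.of a1 * Monoid.CoprodI.of a2 * Monoid.CoprodI.of a3) • w).toList
      = ⟨true, a1⟩ :: ⟨false, a2⟩ :: l := by
  have hsm : (Monoid.CoprodI.of a1 * Monoid.CoprodI.of a2 * Monoid.CoprodI.of a3) • w
      = Monoid.CoprodI.of a1 • (Monoid.CoprodI.of a2 • (Monoid.CoprodI.of a3 • w)) := by
    rw [mul_smul, mul_smul]
  have step : ∃ (c : M true) (l3 : List (Σ b, M b)), c ≠ 1 ∧
      (Monoid.CoprodI.of a3 • w).toList = ⟨true, c⟩ :: l3 := by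
    match hL : w.toList with
    | [] =>
        exact ⟨a3, _, h3,
          by rw [smul_toList_of_fstIdx_ne a3 h3 w (by simp [fstIdx, hL]), hL]⟩
    | ⟨false, m⟩ :: l0 =>
        exact ⟨a3, _, h3,
          by rw [smul_toList_of_fstIdx_ne a3 h3 w (by simp [fstIdx, hL])]⟩
    | ⟨true, m⟩ :: l0 =>
        have hm : a3 * m ≠ 1 := fun hh =>
          hw l0 (by rw [hL, eq_inv_of_mul_eq_one_right hh])
        exact ⟨a3 * m, l0, hm, by rw [smul_toList_cons a3 m w hL, if_neg hm]⟩
  obtain ⟨c, l3, hc, e3⟩ := step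
  have e2 : (Monoid.CoprodI.of a2 • (Monoid.CoprodI.of a3 • w)).toList
      = ⟨false, a2⟩ :: ⟨true, c⟩ :: l3 := by
    rw [smul_toList_of_fstIdx_ne a2 h2 _ (by rw [fstIdx_of_toList_cons e3]; simp), e3]
  have e1 : (Monoid.CoprodI.of a1 • (Monoid.CoprodI.of a2 • (Monoid.CoprodI.of a3 • w))).toList
      = ⟨true, a1⟩ :: ⟨false, a2⟩ :: ⟨true, c⟩ :: l3 := by
    rw [smul_toList_of_fstIdx_ne a1 h1 _ (by rw [fstIdx_of_toList_cons e2]; simp), e2]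
  exact ⟨_, by rw [hsm, e1]⟩

lemma smul_usu (u : M false) (hu : u ≠ 1) (huu : u * u = 1)
    (a1 : M true) (a2 : M false) (a3 : M true)
    (h1 : a1 ≠ 1) (h2 : a2 ≠ 1) (h3 : a3 ≠ 1) (w : Word M)
    (hw : ∀ l0, w.toList ≠ ⟨false, u⟩ :: ⟨true, a3⁻¹⟩ :: l0) :
    ∃ l, ((Monoid.CoprodI.of u * (Monoid.CoprodI.of a1 * Monoid.CoprodI.of a2 *
        Monoid.CoprodI.of a3) * Monoid.CoprodI.of u) • w).toList
      = ⟨false, u⟩ :: ⟨true, a1⟩ :: l := by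
  have huinv : u⁻¹ = u := inv_eq_of_mul_eq_one_right huu
  have hsm : (Monoid.CoprodI.of u * (Monoid.CoprodI.of a1 * Monoid.CoprodI.of a2 *
        Monoid.CoprodI.of a3) * Monoid.CoprodI.of u) • w
      = Monoid.CoprodI.of u • ((Monoid.CoprodI.of a1 * Monoid.CoprodI.of a2 *
        Monoid.CoprodI.of a3) • (Monoid.CoprodI.of u • w)) := by
    rw [mul_smul, mul_smul]
  have hw1 : ∀ l0, (Monoid.CoprodI.of u • w).toList ≠ ⟨true, a3⁻¹⟩ :: l0 := by
    match hL : w.toList with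
    | [] =>
        rw [smul_toList_of_fstIdx_ne u hu w (by simp [fstIdx, hL]), hL]
        intro l0 hbad
        simp at hbad
    | ⟨false, m⟩ :: l0 =>
        by_cases hum : u * m = 1
        · have hmu : m = u := by rw [eq_inv_of_mul_eq_one_right hum, huinv]
          rw [smul_toList_cons u m w hL, if_pos hum]
          intro l1 hbad
          exact hw l1 (by rw [hL, hmu, hbad])
        · rw [smul_toList_cons u m w hL, if_neg hum]
          intro l1 hbad
          simp at hbad
    | ⟨true, m⟩ :: l0 =>
        rw [smul_toList_of_fstIdx_ne u hu w (by simp [fstIdx, hL]), hL]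
        intro l1 hbad
        simp at hbad
  obtain ⟨l, e2⟩ := smul_ttt a1 a2 a3 h1 h2 h3 _ hw1
  have e1 : (Monoid.CoprodI.of u • ((Monoid.CoprodI.of a1 * Monoid.CoprodI.of a2 *
        Monoid.CoprodI.of a3) • (Monoid.CoprodI.of u • w))).toList
      = ⟨false, u⟩ :: ⟨true, a1⟩ :: ⟨false, a2⟩ :: l := by
    rw [smul_toList_of_fstIdx_ne u hu _ (by rw [fstIdx_of_toList_cons e2]; simp), e2]
  exact ⟨_, by rw [hsm, e1]⟩

end WordB

namespace TKW
open Monoid.CoprodI Monoid.CoprodI.Word WordPP WordB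

def Mf (p q : ℕ) : Bool → Type := fun b => cond b (Multiplicative (ZMod q)) (Multiplicative (ZMod (2 * p)))

instance (p q : ℕ) : (b : Bool) → Group (Mf p q b)
  | false => inferInstanceAs (Group (Multiplicative (ZMod (2 * p))))
  | true => inferInstanceAs (Group (Multiplicative (ZMod q)))

instance (p q : ℕ) : (b : Bool) → DecidableEq (Mf p q b)
  | false => inferInstanceAs (DecidableEq (Multiplicative (ZMod (2 * p))))
  | true => inferInstanceAs (DecidableEq (Multiplicative (ZMod q)))

variable (p q : ℕ)

def xiE : Mf p q false := Multiplicative.ofAdd (1 : ZMod (2 * p))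

def uE : Mf p q false := xiE p q ^ p

def tE : Mf p q true := Multiplicative.ofAdd (1 : ZMod q)

section facts
variable (hp : 1 ≤ p) (hq : 3 ≤ q)

include hp in
lemma xiE_ne : xiE p q ≠ 1 := by
  haveI : Fact (1 < 2 * p) := ⟨by omega⟩
  intro h
  have : (1 : ZMod (2 * p)) = 0 := congrArg Multiplicative.toAdd h
  exact one_ne_zero this

include hq in
lemma tE_ne : tE p q ≠ 1 := by
  haveI : Fact (1 < q) := ⟨by omega⟩
  intro h
  have : (1 : ZMod q) = 0 := congrArg Multiplicative.toAdd h
  exact one_ne_zero this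

lemma uE_eq : uE p q = Multiplicative.ofAdd ((p : ZMod (2 * p))) := by
  have h : (Multiplicative.ofAdd (1 : ZMod (2 * p))) ^ p
      = Multiplicative.ofAdd ((p : ZMod (2 * p))) := by
    rw [← ofAdd_nsmul]
    congr 1
    rw [nsmul_eq_mul, mul_one]
  exact h

include hp in
lemma uE_ne : uE p q ≠ 1 := by
  haveI : NeZero (2 * p) := ⟨by omega⟩
  rw [uE_eq]
  intro h
  have : ((p : ℕ) : ZMod (2 * p)) = 0 := congrArg Multiplicative.toAdd h
  rw [ZMod.natCast_eq_zero_iff] at this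
  have := Nat.le_of_dvd (by omega) this
  omega

lemma uE_sq : uE p q * uE p q = 1 := by
  rw [uE_eq]
  have h : Multiplicative.ofAdd ((p : ZMod (2 * p))) * Multiplicative.ofAdd ((p : ZMod (2 * p)))
      = (1 : Multiplicative (ZMod (2 * p))) := by
    rw [← ofAdd_add]
    have h2 : ((p : ZMod (2 * p)) + (p : ZMod (2 * p))) = (((2 * p : ℕ) : ZMod (2 * p))) := by
      push_cast
      ring
    rw [h2, ZMod.natCast_self]
    rfl
  exact h

include hq in
lemma tE_sq_ne : tE p q * tE p q ≠ 1 := by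
  haveI : NeZero q := ⟨by omega⟩
  intro h
  have : ((1 : ZMod q) + 1) = 0 := congrArg Multiplicative.toAdd h
  have h2 : ((2 : ℕ) : ZMod q) = 0 := by push_cast; linear_combination this
  rw [ZMod.natCast_eq_zero_iff] at h2
  have := Nat.le_of_dvd (by omega) h2
  omega

include hq in
lemma tE_ne_inv : tE p q ≠ (tE p q)⁻¹ := by
  intro h
  apply tE_sq_ne p q hq
  nth_rewrite 2 [h]
  exact mul_inv_cancel _

end facts

def ub : Monoid.CoprodI (Mf p q) := Monoid.CoprodI.of (uE p q)
def tb : Monoid.CoprodI (Mf p q) := Monoid.CoprodI.of (tE p q)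
def xib : Monoid.CoprodI (Mf p q) := Monoid.CoprodI.of (xiE p q)

def wbar : Monoid.CoprodI (Mf p q) := tb p q * xib p q * tb p q
def sbar : Monoid.CoprodI (Mf p q) := ub p q * wbar p q * ub p q

lemma ub_sq : ub p q * ub p q = 1 := by
  rw [ub, ← MonoidHom.map_mul, uE_sq, MonoidHom.map_one]

lemma ub_inv : (ub p q)⁻¹ = ub p q := inv_eq_of_mul_eq_one_right (ub_sq p q)

lemma wbar_inv : (wbar p q)⁻¹ =
    Monoid.CoprodI.of (tE p q)⁻¹ * Monoid.CoprodI.of (xiE p q)⁻¹ *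
      Monoid.CoprodI.of (tE p q)⁻¹ := by
  rw [wbar, tb, xib, mul_inv_rev, mul_inv_rev, ← MonoidHom.map_inv, ← MonoidHom.map_inv,
    ← mul_assoc]

lemma sbar_inv : (sbar p q)⁻¹ =
    Monoid.CoprodI.of (uE p q) * ((wbar p q)⁻¹) * Monoid.CoprodI.of (uE p q) := by
  rw [sbar, mul_inv_rev, mul_inv_rev]
  rw [show (ub p q)⁻¹ = Monoid.CoprodI.of (uE p q) from ub_inv p q]
  rw [mul_assoc]

theorem free_sw (hp : 1 ≤ p) (hq : 3 ≤ q) :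
    Function.Injective (FreeGroup.lift (fun b : Bool => cond b (wbar p q) (sbar p q))) := by
  have hu := uE_ne p q hp
  have ht := tE_ne p q hq
  have hxi := xiE_ne p q hp
  have htinv : (tE p q)⁻¹ ≠ 1 := inv_ne_one.mpr ht
  have hxinv : (xiE p q)⁻¹ ≠ 1 := inv_ne_one.mpr hxi
  have htne := tE_ne_inv p q hq
  apply FreeGroup.injective_lift_of_ping_pong _
    (fun b : Bool => cond b
      {w : Word (Mf p q) | ∃ l, w.toList = ⟨true, tE p q⟩ :: l}
      {w : Word (Mf p q) | ∃ l, w.toList = ⟨false, uE p q⟩ :: ⟨true, tE p q⟩ :: l})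
    (fun b : Bool => cond b
      {w : Word (Mf p q) | ∃ l, w.toList = ⟨true, (tE p q)⁻¹⟩ :: l}
      {w : Word (Mf p q) | ∃ l, w.toList = ⟨false, uE p q⟩ :: ⟨true, (tE p q)⁻¹⟩ :: l})
  · -- nonempty
    intro b
    cases b
    · exact ⟨⟨[⟨false, uE p q⟩, ⟨true, tE p q⟩], by simp [hu, ht], by simp⟩, [], rfl⟩
    · exact ⟨⟨[⟨true, tE p q⟩], by simp [ht], by simp⟩, [], rfl⟩
  · -- X pairwise disjoint
    intro b b' hbb'
    simp only [Function.onFun]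
    rw [Set.disjoint_left]
    intro w hw hw'
    cases b <;> cases b' <;> try exact hbb' rfl
    · obtain ⟨l, hl⟩ := hw
      obtain ⟨l', hl'⟩ := hw'
      rw [hl] at hl'
      simp at hl'
    · obtain ⟨l, hl⟩ := hw
      obtain ⟨l', hl'⟩ := hw'
      rw [hl] at hl'
      simp at hl'
  · -- Y pairwise disjoint
    intro b b' hbb'
    simp only [Function.onFun]
    rw [Set.disjoint_left]
    intro w hw hw'
    cases b <;> cases b' <;> try exact hbb' rfl
    · obtain ⟨l, hl⟩ := hw
      obtain ⟨l', hl'⟩ := hw'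
      rw [hl] at hl'
      simp at hl'
    · obtain ⟨l, hl⟩ := hw
      obtain ⟨l', hl'⟩ := hw'
      rw [hl] at hl'
      simp at hl'
  · -- X vs Y disjoint
    intro b b'
    rw [Set.disjoint_left]
    intro w hw hw'
    cases b <;> cases b' <;>
        obtain ⟨l, hl⟩ := hw <;> obtain ⟨l', hl'⟩ := hw' <;> rw [hl] at hl' <;>
        simp only [List.cons.injEq, true_and] at hl'
    · obtain ⟨h1, -⟩ := hl'
      injection h1 with _ h2
      exact htne h2
    · obtain ⟨h1, -⟩ := hl'
      injection h1 with h1a _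
      exact Bool.noConfusion h1a
    · obtain ⟨h1, -⟩ := hl'
      injection h1 with h1a _
      exact Bool.noConfusion h1a
    · obtain ⟨h1, -⟩ := hl'
      injection h1 with _ h2
      exact htne h2
  · -- hX
    intro b
    rintro v ⟨w, hw, rfl⟩
    cases b
    · -- sbar
      have hw' : ∀ l0, w.toList ≠ ⟨false, uE p q⟩ :: ⟨true, (tE p q)⁻¹⟩ :: l0 := by
        intro l0 hbad
        exact hw ⟨l0, hbad⟩
      obtain ⟨l, e⟩ := smul_usu (uE p q) hu (uE_sq p q) (tE p q) (xiE p q) (tE p q)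
        ht hxi ht w hw'
      exact ⟨_, e⟩
    · -- wbar
      have hw' : ∀ l0, w.toList ≠ ⟨true, (tE p q)⁻¹⟩ :: l0 := by
        intro l0 hbad
        exact hw ⟨l0, hbad⟩
      obtain ⟨l, e⟩ := smul_ttt (tE p q) (xiE p q) (tE p q) ht hxi ht w hw'
      exact ⟨_, e⟩
  · -- hY
    intro b
    rintro v ⟨w, hw, rfl⟩
    cases b
    · -- sbar⁻¹
      have hw' : ∀ l0, w.toList ≠ ⟨false, uE p q⟩ :: ⟨true, ((tE p q)⁻¹)⁻¹⟩ :: l0 := by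
        rw [inv_inv]
        intro l0 hbad
        exact hw ⟨l0, hbad⟩
      obtain ⟨l, e⟩ := smul_usu (uE p q) hu (uE_sq p q) (tE p q)⁻¹ (xiE p q)⁻¹ (tE p q)⁻¹
        htinv hxinv htinv w hw'
      refine ⟨l, ?_⟩
      show ((fun b : Bool => cond b (wbar p q) (sbar p q))⁻¹ false • w).toList = _
      rw [Pi.inv_apply]
      show ((sbar p q)⁻¹ • w).toList = _
      rw [sbar_inv, wbar_inv]
      exact e
    · -- wbar⁻¹
      have hw' : ∀ l0, w.toList ≠ ⟨true, ((tE p q)⁻¹)⁻¹⟩ :: l0 := by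
        rw [inv_inv]
        intro l0 hbad
        exact hw ⟨l0, hbad⟩
      obtain ⟨l, e⟩ := smul_ttt (tE p q)⁻¹ (xiE p q)⁻¹ (tE p q)⁻¹ htinv hxinv htinv w hw'
      refine ⟨⟨false, (xiE p q)⁻¹⟩ :: l, ?_⟩
      show ((fun b : Bool => cond b (wbar p q) (sbar p q))⁻¹ true • w).toList = _
      rw [Pi.inv_apply]
      show ((wbar p q)⁻¹ • w).toList = _
      rw [wbar_inv]
      exact e

end TKW

namespace TKMain
open TKW TKProof2

variable (p q : ℕ)

abbrev G (p q : ℕ) := PresentedGroup (torusKnotRels p q)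

def xg : G p q := PresentedGroup.of 0
def yg : G p q := PresentedGroup.of 1

def Wg : G p q := yg p q * xg p q * yg p q

def zg (j : ℕ) : G p q :=
  (xg p q ^ p)⁻¹ * ((Wg p q) ^ j)⁻¹ * xg p q ^ p * (Wg p q) ^ j

lemma rel1 : xg p q ^ (2 * p) = yg p q ^ q := by
  have h : PresentedGroup.mk (torusKnotRels p q)
      (FreeGroup.of 0 ^ (2 * p) * (FreeGroup.of 1 ^ q)⁻¹) = 1 := by
    apply (QuotientGroup.eq_one_iff _).mpr
    apply Subgroup.subset_normalClosure
    rfl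
  rw [map_mul, map_inv, map_pow, map_pow] at h
  exact mul_inv_eq_one.mp h

lemma central (g : G p q) : Commute (xg p q ^ (2 * p)) g := by
  have hmem : g ∈ Subgroup.centralizer {xg p q ^ (2 * p)} := by
    apply PresentedGroup.generated_by
    intro j
    rw [Subgroup.mem_centralizer_iff]
    rintro c (rfl : c = xg p q ^ (2 * p))
    fin_cases j
    · exact ((Commute.refl (xg p q)).pow_left _).eq
    · show xg p q ^ (2 * p) * yg p q = yg p q * xg p q ^ (2 * p)
      rw [rel1]
      exact ((Commute.refl (yg p q)).pow_left _).eq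
  exact Subgroup.mem_centralizer_iff.mp hmem _ rfl

lemma z_rel (j : ℕ) :
    zg p q j * xg p q ^ p * zg p q j * (xg p q ^ p)⁻¹ = 1 := by
  have hcomm : ((Wg p q) ^ j)⁻¹ * (xg p q ^ (2 * p)) * (Wg p q) ^ j = xg p q ^ (2 * p) := by
    rw [mul_assoc, (central p q ((Wg p q) ^ j)).eq, ← mul_assoc, inv_mul_cancel, one_mul]
  have hcc : xg p q ^ (2 * p) = xg p q ^ p * xg p q ^ p := by
    rw [← pow_add]
    congr 1
    omega
  have expand : zg p q j * xg p q ^ p * zg p q j * (xg p q ^ p)⁻¹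
      = (xg p q ^ p)⁻¹ * ((((Wg p q) ^ j)⁻¹ * (xg p q ^ p * xg p q ^ p) * (Wg p q) ^ j))
        * (xg p q ^ p)⁻¹ := by
    show ((xg p q ^ p)⁻¹ * ((Wg p q) ^ j)⁻¹ * xg p q ^ p * (Wg p q) ^ j) * xg p q ^ p
        * ((xg p q ^ p)⁻¹ * ((Wg p q) ^ j)⁻¹ * xg p q ^ p * (Wg p q) ^ j) * (xg p q ^ p)⁻¹ = _
    group
  rw [expand, ← hcc, hcomm, hcc]
  group

/-- the degree homomorphism -/
def deg : G p q →* Multiplicative ℤ :=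
  PresentedGroup.toGroup
    (f := fun j : Fin 2 => Multiplicative.ofAdd (if j = 0 then (q : ℤ) else (2 * p : ℤ)))
    (by
      rintro r (rfl : r = _)
      rw [map_mul, map_inv, map_pow, map_pow, FreeGroup.lift_apply_of, FreeGroup.lift_apply_of]
      rw [if_pos rfl, if_neg (by decide)]
      rw [mul_inv_eq_one, ← ofAdd_nsmul, ← ofAdd_nsmul]
      congr 1
      simp only [nsmul_eq_mul]
      push_cast
      ring)

lemma deg_x : deg p q (xg p q) = Multiplicative.ofAdd (q : ℤ) := by
  simp [deg, xg, PresentedGroup.toGroup.of]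

lemma deg_y : deg p q (yg p q) = Multiplicative.ofAdd (2 * p : ℤ) := by
  show PresentedGroup.toGroup _ (PresentedGroup.of 1) = _
  rw [PresentedGroup.toGroup.of]
  simp

/-- the homomorphism to the free product of cyclic groups -/
def rho : G p q →* Monoid.CoprodI (Mf p q) :=
  PresentedGroup.toGroup
    (f := fun j : Fin 2 => if j = 0 then xib p q else tb p q)
    (by
      rintro r (rfl : r = _)
      rw [map_mul, map_inv, map_pow, map_pow, FreeGroup.lift_apply_of, FreeGroup.lift_apply_of]
      rw [if_pos rfl, if_neg (by decide)]
      have h1 : xib p q ^ (2 * p) = 1 := by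
        rw [xib, ← MonoidHom.map_pow]
        have : xiE p q ^ (2 * p) = 1 := by
          have h : (Multiplicative.ofAdd (1 : ZMod (2 * p))) ^ (2 * p)
              = (1 : Multiplicative (ZMod (2 * p))) := by
            rw [← ofAdd_nsmul, nsmul_eq_mul, mul_one, ZMod.natCast_self]
            rfl
          exact h
        rw [this, MonoidHom.map_one]
      have h2 : tb p q ^ q = 1 := by
        rw [tb, ← MonoidHom.map_pow]
        have : tE p q ^ q = 1 := by
          have h : (Multiplicative.ofAdd (1 : ZMod q)) ^ q = (1 : Multiplicative (ZMod q)) := by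
            rw [← ofAdd_nsmul, nsmul_eq_mul, mul_one, ZMod.natCast_self]
            rfl
          exact h
        rw [this, MonoidHom.map_one]
      rw [h1, h2]
      simp)

lemma rho_x : rho p q (xg p q) = xib p q := by
  show PresentedGroup.toGroup _ (PresentedGroup.of 0) = _
  rw [PresentedGroup.toGroup.of]
  simp

lemma rho_y : rho p q (yg p q) = tb p q := by
  show PresentedGroup.toGroup _ (PresentedGroup.of 1) = _
  rw [PresentedGroup.toGroup.of]
  simp

lemma xib_pow_p : xib p q ^ p = ub p q := by
  rw [xib, ub, ← MonoidHom.map_pow]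
  rfl

lemma rho_z (k : ℕ) : rho p q (zg p q k) = (sbar p q ^ k)⁻¹ * wbar p q ^ k := by
  have hW : rho p q (Wg p q) = wbar p q := by
    rw [Wg, map_mul, map_mul, rho_x, rho_y, wbar]
  have hsb : sbar p q = ub p q * wbar p q * (ub p q)⁻¹ := by
    rw [ub_inv, sbar]
  have hpow : sbar p q ^ k = ub p q * wbar p q ^ k * (ub p q)⁻¹ := by
    rw [hsb, conj_pow]
  rw [zg, map_mul, map_mul, map_mul, map_inv, map_inv, map_pow, map_pow, hW, rho_x,
    xib_pow_p, hpow, mul_inv_rev, mul_inv_rev, inv_inv, ub_inv]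
  group

end TKMain

namespace TKMain
open TKW TKProof2

theorem partA (p q n : ℕ) (hp : 1 ≤ p) (hq : 3 ≤ q) :
    Function.Injective (FreeGroup.lift (fun i : Fin n => zg p q (i.1 + 1))) := by
  have hfac : (rho p q).comp (FreeGroup.lift (fun i : Fin n => zg p q (i.1 + 1)))
      = (FreeGroup.lift (fun b : Bool => cond b (wbar p q) (sbar p q))).comp
          (FreeGroup.lift (fun i : Fin n => zeta (i.1 + 1))) := by
    ext i
    simp only [MonoidHom.comp_apply, FreeGroup.lift_apply_of]
    rw [rho_z]
    simp only [zeta]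
    rw [map_mul, map_inv, map_pow, map_pow, FreeGroup.lift_apply_of, FreeGroup.lift_apply_of]
    rfl
  have hinj : Function.Injective
      ((FreeGroup.lift (fun b : Bool => cond b (wbar p q) (sbar p q))).comp
        (FreeGroup.lift (fun i : Fin n => zeta (i.1 + 1)))) := by
    rw [MonoidHom.coe_comp]
    exact (free_sw p q hp hq).comp (zeta_free' n)
  rw [← hfac, MonoidHom.coe_comp] at hinj
  exact hinj.of_comp

section PartB

variable (n : ℕ)

/-- inversion homomorphism on the free group -/
def invHom : FreeGroup (Fin n) →* FreeGroup (Fin n) :=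
  FreeGroup.lift (fun i => (FreeGroup.of i)⁻¹)

lemma invHom_invHom : (invHom n).comp (invHom n) = MonoidHom.id _ := by
  ext i
  simp [invHom]

lemma invHom_invHom' (w : FreeGroup (Fin n)) : invHom n (invHom n w) = w := by
  have := DFunLike.congr_fun (invHom_invHom n) w
  simpa using this

def invAut : MulAut (FreeGroup (Fin n)) :=
  MonoidHom.toMulEquiv (invHom n) (invHom n) (invHom_invHom n) (invHom_invHom n)

lemma invAut_apply (w : FreeGroup (Fin n)) : invAut n w = invHom n w := rfl

def phiD : Multiplicative ℤ →* MulAut (FreeGroup (Fin n)) := zpowersHom _ (invAut n)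

abbrev D := SemidirectProduct (FreeGroup (Fin n)) (Multiplicative ℤ) (phiD n)

abbrev T := PresentedGroup (sinkStarRels n)

def ahat : T n := PresentedGroup.of none
def bhat (i : Fin n) : T n := PresentedGroup.of (some i)

lemma T_rel (i : Fin n) : bhat n i * ahat n * bhat n i * (ahat n)⁻¹ = 1 := by
  have h : PresentedGroup.mk (sinkStarRels n)
      (FreeGroup.of (some i) * FreeGroup.of none * FreeGroup.of (some i) *
        (FreeGroup.of none)⁻¹) = 1 := by
    apply (QuotientGroup.eq_one_iff _).mpr
    exact Subgroup.subset_normalClosure ⟨i, rfl⟩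
  rw [map_mul, map_mul, map_mul, map_inv] at h
  exact h

lemma conj_b (i : Fin n) : ahat n * bhat n i * (ahat n)⁻¹ = (bhat n i)⁻¹ := by
  have h := T_rel n i
  have hbab : bhat n i * ahat n * bhat n i = ahat n := by
    have := mul_inv_eq_one.mp h
    exact this
  calc ahat n * bhat n i * (ahat n)⁻¹
      = (bhat n i)⁻¹ * (bhat n i * ahat n * bhat n i) * (ahat n)⁻¹ := by group
    _ = (bhat n i)⁻¹ := by rw [hbab]; group

/-- lift of the b-generators -/
def Bh : FreeGroup (Fin n) →* T n := FreeGroup.lift (fun i => bhat n i)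

lemma conjA (w : FreeGroup (Fin n)) :
    ahat n * Bh n w * (ahat n)⁻¹ = Bh n (invHom n w) := by
  have h : (MulAut.conj (ahat n)).toMonoidHom.comp (Bh n)
      = (Bh n).comp (invHom n) := by
    ext i
    simp only [MonoidHom.comp_apply, FreeGroup.lift_apply_of, MulEquiv.coe_toMonoidHom,
      MulAut.conj_apply, invHom, Bh]
    rw [map_inv, FreeGroup.lift_apply_of]
    exact conj_b n i
  have h2 := DFunLike.congr_fun h w
  simpa [MulAut.conj_apply] using h2

lemma conjA' (w : FreeGroup (Fin n)) :
    (ahat n)⁻¹ * Bh n w * ahat n = Bh n (invHom n w) := by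
  have h := conjA n (invHom n w)
  rw [invHom_invHom'] at h
  rw [← h]
  group

lemma Bh_invAut_zpow (k : ℤ) (w : FreeGroup (Fin n)) :
    Bh n ((invAut n ^ k) w) = ahat n ^ k * Bh n w * (ahat n)⁻¹ ^ k := by
  induction k using Int.induction_on with
  | zero => simp
  | succ k ih =>
      have he : invAut n ^ ((k : ℤ) + 1) = invAut n * invAut n ^ (k : ℤ) := by
        rw [← zpow_one_add]; ring_nf
      rw [he]
      have happ : (invAut n * invAut n ^ (k : ℤ)) w = invAut n ((invAut n ^ (k : ℤ)) w) := rfl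
      rw [happ, invAut_apply, ← conjA, ih]
      rw [zpow_add, zpow_add, zpow_one, zpow_one]
      group
  | pred k ih =>
      have he : invAut n ^ (-(k : ℤ) - 1) = (invAut n)⁻¹ * invAut n ^ (-(k : ℤ)) := by
        rw [← zpow_neg_one, ← zpow_add]; ring_nf
      rw [he]
      have happ : ((invAut n)⁻¹ * invAut n ^ (-(k : ℤ))) w
          = (invAut n)⁻¹ ((invAut n ^ (-(k : ℤ))) w) := rfl
      rw [happ]
      have hinv : ((invAut n)⁻¹ : MulAut (FreeGroup (Fin n))) ((invAut n ^ (-(k : ℤ))) w)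
          = invHom n ((invAut n ^ (-(k : ℤ))) w) := rfl
      rw [hinv, ← conjA', ih]
      rw [zpow_sub, zpow_sub, zpow_one, zpow_one]
      group

lemma tau_cond : ∀ g : Multiplicative ℤ,
    (Bh n).comp ((phiD n g).toMonoidHom)
      = (MulAut.conj ((zpowersHom (T n) (ahat n)) g)).toMonoidHom.comp (Bh n) := by
  intro g
  ext i
  simp only [MonoidHom.comp_apply, FreeGroup.lift_apply_of, MulEquiv.coe_toMonoidHom,
    MulAut.conj_apply]
  rw [show (phiD n g) = invAut n ^ (Multiplicative.toAdd g) from rfl]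
  rw [show ((zpowersHom (T n) (ahat n)) g) = ahat n ^ (Multiplicative.toAdd g) from rfl]
  rw [Bh_invAut_zpow]
  rw [inv_zpow]

def tauD : D n →* T n :=
  SemidirectProduct.lift (Bh n) (zpowersHom (T n) (ahat n)) (tau_cond n)

def sigT : T n →* D n :=
  PresentedGroup.toGroup
    (f := fun o : Option (Fin n) => o.elim
      (SemidirectProduct.inr (Multiplicative.ofAdd (1 : ℤ)))
      (fun i => SemidirectProduct.inl (FreeGroup.of i)))
    (by
      rintro r ⟨i, rfl⟩
      simp only [map_mul, map_inv, FreeGroup.lift_apply_of]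
      show (SemidirectProduct.inl (FreeGroup.of i) : D n)
          * SemidirectProduct.inr (Multiplicative.ofAdd (1 : ℤ))
          * SemidirectProduct.inl (FreeGroup.of i)
          * (SemidirectProduct.inr (Multiplicative.ofAdd (1 : ℤ)))⁻¹ = 1
      have h1 : (phiD n) (Multiplicative.ofAdd (1 : ℤ)) (FreeGroup.of i)
          = (FreeGroup.of i)⁻¹ := by
        rw [show (phiD n) (Multiplicative.ofAdd (1 : ℤ)) = invAut n ^ (1 : ℤ) from rfl,
          zpow_one, invAut_apply, invHom, FreeGroup.lift_apply_of]
      have h2 : (SemidirectProduct.inl (FreeGroup.of i) : D n)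
          * SemidirectProduct.inr (Multiplicative.ofAdd (1 : ℤ))
          * SemidirectProduct.inl (FreeGroup.of i)
          * (SemidirectProduct.inr (Multiplicative.ofAdd (1 : ℤ)))⁻¹
          = SemidirectProduct.inl (FreeGroup.of i)
            * (SemidirectProduct.inr (Multiplicative.ofAdd (1 : ℤ))
              * SemidirectProduct.inl (FreeGroup.of i)
              * SemidirectProduct.inr ((Multiplicative.ofAdd (1 : ℤ))⁻¹)) := by
        rw [MonoidHom.map_inv]
        group
      rw [h2, ← SemidirectProduct.inl_aut, h1, ← MonoidHom.map_mul, mul_inv_cancel,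
        MonoidHom.map_one])

lemma tau_sig (t : T n) : tauD n (sigT n t) = t := by
  have h : (tauD n).comp (sigT n) = MonoidHom.id (T n) := by
    apply PresentedGroup.ext
    intro o
    cases o with
    | none =>
        show tauD n (sigT n (PresentedGroup.of none)) = PresentedGroup.of none
        rw [show sigT n (PresentedGroup.of none)
            = SemidirectProduct.inr (Multiplicative.ofAdd (1 : ℤ)) from
          PresentedGroup.toGroup.of _]
        rw [tauD, SemidirectProduct.lift_inr]
        show ahat n ^ (1 : ℤ) = _
        rw [zpow_one]
        rfl
    | some i =>
        show tauD n (sigT n (PresentedGroup.of (some i))) = PresentedGroup.of (some i)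
        rw [show sigT n (PresentedGroup.of (some i))
            = SemidirectProduct.inl (FreeGroup.of i) from PresentedGroup.toGroup.of _]
        rw [tauD, SemidirectProduct.lift_inl]
        show Bh n (FreeGroup.of i) = _
        rw [Bh, FreeGroup.lift_apply_of]
        rfl
  exact DFunLike.congr_fun h t

end PartB

end TKMain

namespace TKMain
open TKW TKProof2

variable (p q n : ℕ)

def Phi : T n →* G p q :=
  PresentedGroup.toGroup
    (f := fun o : Option (Fin n) => o.elim (xg p q ^ p) (fun i => zg p q (i.1 + 1)))
    (by
      rintro r ⟨i, rfl⟩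
      simp only [map_mul, map_inv, FreeGroup.lift_apply_of]
      exact z_rel p q (i.1 + 1))

lemma Phi_a : Phi p q n (ahat n) = xg p q ^ p := by
  show PresentedGroup.toGroup _ (PresentedGroup.of none) = _
  rw [PresentedGroup.toGroup.of]
  rfl

lemma Phi_b (i : Fin n) : Phi p q n (bhat n i) = zg p q (i.1 + 1) := by
  show PresentedGroup.toGroup _ (PresentedGroup.of (some i)) = _
  rw [PresentedGroup.toGroup.of]
  rfl

lemma Phi_Bh : (Phi p q n).comp (Bh n) = FreeGroup.lift (fun i : Fin n => zg p q (i.1 + 1)) := by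
  ext i
  simp only [MonoidHom.comp_apply, FreeGroup.lift_apply_of, Bh]
  exact Phi_b p q n i

lemma deg_z (k : ℕ) : deg p q (zg p q k) = 1 := by
  have key : ∀ a b : Multiplicative ℤ, a⁻¹ * b⁻¹ * a * b = 1 := by
    intro a b
    rw [mul_assoc, mul_comm a b, ← mul_assoc]
    group
  rw [zg]
  simp only [map_mul, map_inv, map_pow]
  exact key _ _

theorem Phi_inj (hp : 1 ≤ p) (hq : 3 ≤ q) : Function.Injective (Phi p q n) := by
  have hker : ∀ t, Phi p q n t = 1 → t = 1 := by
    intro t ht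
    set d := sigT n t with hd
    have htau : tauD n (sigT n t) = t := tau_sig n t
    have hPhit : Phi p q n (tauD n d) = 1 := by rw [← hd] at htau; rw [htau]; exact ht
    have hdec : tauD n d = Bh n d.left * ahat n ^ (Multiplicative.toAdd d.right) := by
      conv_lhs => rw [← SemidirectProduct.inl_left_mul_inr_right d]
      rw [map_mul, tauD, SemidirectProduct.lift_inl, SemidirectProduct.lift_inr]
      rfl
    have hPhi2 : (FreeGroup.lift (fun i : Fin n => zg p q (i.1 + 1))) d.left
        * (xg p q ^ p) ^ (Multiplicative.toAdd d.right) = 1 := by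
      have h := hPhit
      rw [hdec, map_mul, map_zpow, Phi_a] at h
      rw [← DFunLike.congr_fun (Phi_Bh p q n) d.left]
      exact h
    have hdeg : deg p q ((FreeGroup.lift (fun i : Fin n => zg p q (i.1 + 1))) d.left) = 1 := by
      have hcomp : (deg p q).comp (FreeGroup.lift (fun i : Fin n => zg p q (i.1 + 1))) = 1 := by
        ext i
        simp only [MonoidHom.comp_apply, FreeGroup.lift_apply_of, MonoidHom.one_apply]
        exact deg_z p q (i.1 + 1)
      have h := DFunLike.congr_fun hcomp d.left
      simpa using h
    have hk0 : Multiplicative.toAdd d.right = 0 := by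
      have h1 : deg p q ((xg p q ^ p) ^ (Multiplicative.toAdd d.right)) = 1 := by
        have h := congrArg (deg p q) hPhi2
        rw [map_mul, hdeg, one_mul, map_one] at h
        exact h
      rw [map_zpow, map_pow, deg_x] at h1
      have h3 := congrArg Multiplicative.toAdd h1
      rw [toAdd_zpow, toAdd_pow, toAdd_ofAdd] at h3
      simp only [toAdd_one, smul_eq_mul] at h3
      have hpq : (p : ℤ) * q ≠ 0 := by
        have h4 : p * q ≠ 0 := Nat.mul_ne_zero (by omega) (by omega)
        exact_mod_cast h4
      rcases mul_eq_zero.mp h3 with h | h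
      · exact h
      · exact absurd h hpq
    have hright : d.right = 1 := by
      have h : Multiplicative.toAdd d.right = Multiplicative.toAdd (1 : Multiplicative ℤ) := by
        simpa using hk0
      exact Multiplicative.toAdd.injective h
    have hleft : d.left = 1 := by
      apply partA p q n hp hq
      rw [map_one]
      rw [hk0, zpow_zero, mul_one] at hPhi2
      exact hPhi2
    have hd1 : d = 1 := by
      rw [← SemidirectProduct.inl_left_mul_inr_right d, hleft, hright]
      simp
    rw [← hd] at htau
    rw [← htau, hd1, map_one]
  intro a b hab
  have h : a * b⁻¹ = 1 := hker _ (by rw [map_mul, map_inv, hab, mul_inv_cancel])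
  have := mul_inv_eq_one.mp h
  exact this

lemma Phi_range : (Phi p q n).range
    = Subgroup.closure ({xg p q ^ p} ∪ Set.range fun i : Fin n => zg p q (i.1 + 1)) := by
  rw [MonoidHom.range_eq_map, ← PresentedGroup.closure_range_of (sinkStarRels n),
    MonoidHom.map_closure]
  congr 1
  ext g
  constructor
  · rintro ⟨_, ⟨o, rfl⟩, rfl⟩
    cases o with
    | none =>
        left
        rw [Set.mem_singleton_iff]
        exact Phi_a p q n
    | some i =>
        right
        exact ⟨i, (Phi_b p q n i).symm⟩
  · rintro (h | ⟨i, rfl⟩)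
    · rw [Set.mem_singleton_iff] at h
      exact ⟨PresentedGroup.of none, ⟨none, rfl⟩, by rw [h]; exact Phi_a p q n⟩
    · exact ⟨PresentedGroup.of (some i), ⟨some i, rfl⟩, Phi_b p q n i⟩

end TKMain

/-- In the torus knot group `G = ⟨x, y | x^{2p} = y^q⟩` (`p ≥ 1`, `q ≥ 3`,
`gcd(2p,q) = 1`), with `z_i = [x^p, (yxy)^i]` for `i = 1, …, n`, the elements
`z_1, …, z_n` freely generate a free subgroup of rank `n`, and the subgroup
`⟨x^p, z_1, …, z_n⟩` is isomorphic to the TRAAG of the sink star `S_n`, i.e.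
`⟨a, b_1, …, b_n | b_i a b_i = a⟩`. -/
theorem stmt_10 (p q n : ℕ) (hp : 1 ≤ p) (hq : 3 ≤ q)
    (hcop : Nat.Coprime (2 * p) q) :
    letI x : PresentedGroup (torusKnotRels p q) := PresentedGroup.of 0
    letI y : PresentedGroup (torusKnotRels p q) := PresentedGroup.of 1
    letI z : ℕ → PresentedGroup (torusKnotRels p q) := fun i =>
      (x ^ p)⁻¹ * ((y * x * y) ^ i)⁻¹ * x ^ p * (y * x * y) ^ i
    Function.Injective ⇑(FreeGroup.lift fun i : Fin n => z (i.1 + 1)) ∧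
      Nonempty (PresentedGroup (sinkStarRels n) ≃*
        (Subgroup.closure ({x ^ p} ∪ Set.range fun i : Fin n => z (i.1 + 1)) :
          Subgroup (PresentedGroup (torusKnotRels p q)))) := by
  constructor
  · exact TKMain.partA p q n hp hq
  · exact ⟨(MonoidHom.ofInjective (TKMain.Phi_inj p q n hp hq)).trans
      (MulEquiv.subgroupCongr (TKMain.Phi_range p q n))⟩
end

section
/- Let G be a group with a central element h, and suppose c, x ∈ G satisfy (x⁻¹cx)² = h. If c lies in an abelian subgroup ⟨m, λ⟩ ≅ ℤ² containing h = m^{2pq}λ, with c = m^{pq}λ^j, and G is torsion-free, then a contradiction arises: λ^{2j−1} = 1 forces a torsion element. -/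
/-- Let `G` be a torsion-free group with a central element `h`, and `c, x ∈ G` with
`(x⁻¹cx)² = h`. If `c` lies in an abelian subgroup `⟨m, λ⟩ ≅ ℤ²` containing
`h = m^{2pq}λ`, with `c = m^{pq}λʲ`, then a contradiction arises (the forced relation
`λ^{2j−1} = 1` yields a torsion element). -/
theorem stmt_14 {G : Type*} [Group G] (hTF : ∀ g : G, g ≠ 1 → ¬IsOfFinOrder g)
    (h c x m lam : G) (hcent : h ∈ Subgroup.center G)
    (hx : (x⁻¹ * c * x) ^ 2 = h)
    (hcomm : m * lam = lam * m)
    (hZ2 : Function.Injective fun v : ℤ × ℤ => m ^ v.1 * lam ^ v.2)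
    (p q : ℕ) (hp : 1 ≤ p) (hq : 1 ≤ q)
    (hh : h = m ^ (2 * p * q) * lam)
    (j : ℤ) (hc : c = m ^ (p * q) * lam ^ j) :
    False := by
  have hcm : Commute m lam := hcomm
  rw [Subgroup.mem_center_iff] at hcent
  -- c² = h
  have hc2 : c ^ 2 = h := by
    have e : (x⁻¹ * c * x) ^ 2 = x⁻¹ * c ^ 2 * x := by rw [pow_two, pow_two]; group
    rw [e] at hx
    have : c ^ 2 = x * h * x⁻¹ := by rw [← hx]; group
    rw [this, hcent x, mul_assoc, mul_inv_cancel, mul_one]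
  -- rewrite both sides in canonical ℤ² form
  have hC : Commute (m ^ ((p * q : ℕ) : ℤ)) (lam ^ j) := hcm.zpow_zpow _ _
  have key : m ^ (2 * ((p * q : ℕ) : ℤ)) * lam ^ (2 * j)
      = m ^ (((2 * p * q : ℕ) : ℤ)) * lam ^ (1 : ℤ) := by
    have lhs : c ^ 2 = m ^ (2 * ((p * q : ℕ) : ℤ)) * lam ^ (2 * j) := by
      rw [hc, ← zpow_natCast m (p * q), hC.mul_pow, ← zpow_natCast (m ^ _) 2,
        ← zpow_natCast (lam ^ j) 2, ← zpow_mul, ← zpow_mul]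
      norm_num [mul_comm]
    have rhs : h = m ^ (((2 * p * q : ℕ) : ℤ)) * lam ^ (1 : ℤ) := by
      rw [hh, zpow_natCast, zpow_one]
    rw [← lhs, ← rhs, hc2]
  have := hZ2 (a₁ := (2 * ((p * q : ℕ) : ℤ), 2 * j))
    (a₂ := (((2 * p * q : ℕ) : ℤ), 1)) key
  have h2 : 2 * j = 1 := congrArg Prod.snd this
  omega
end

section
/- Let G = A *_H B be an amalgamated free product, and let a ∈ A \ H, b ∈ B \ H with the property that b^i ∉ H for all nonzero integers i and H is malnormal in B (i.e. x⁻¹Hx ∩ H = {1} for x ∈ B \ H). Let S ≤ A be a subgroup. Then the subgroup of G generated by (ba)⁻¹S(ba) and b is isomorphic to the free product S * ⟨b⟩ ≅ S * ℤ. -/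
open Monoid
open Monoid

private theorem aux_reduced_prod_ne_one {ι : Type*} {H : Type*} {G : ι → Type*} [Group H]
    [∀ i, Group (G i)] (φ : ∀ i, H →* G i) (hφ : ∀ i, Function.Injective (φ i))
    (l : List (Σ k, G k)) (hl : l ≠ [])
    (hred : ∀ p ∈ l, p.2 ∉ (φ p.1).range)
    (hchain : l.Chain' (fun p q => p.1 ≠ q.1)) :
    (l.map fun p => PushoutI.of (φ := φ) p.1 p.2).prod ≠ 1 := by
  intro h1
  have hne : ∀ p ∈ l, p.2 ≠ (1 : G p.1) := fun p hp h => hred p hp (h ▸ one_mem _)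
  let w : CoprodI.Word G := ⟨l, hne, hchain⟩
  have hwred : PushoutI.Reduced φ w := hred
  have hprod : PushoutI.ofCoprodI (φ := φ) w.prod
      = (l.map fun p => PushoutI.of (φ := φ) p.1 p.2).prod := by
    show PushoutI.ofCoprodI (φ := φ) (List.prod (l.map fun p => CoprodI.of p.2)) = _
    rw [map_list_prod, List.map_map]
    simp [Function.comp_def, PushoutI.ofCoprodI_of]
  have hemp := hwred.eq_empty_of_mem_range hφ (by rw [hprod, h1]; exact one_mem _)
  exact hl (by simpa [CoprodI.Word.empty, w] using congrArg CoprodI.Word.toList hemp)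


universe u

private abbrev K15 (S : Type u) : Bool → Type u
  | true => S
  | false => ULift (Multiplicative ℤ)

private instance K15.group (S : Type u) [Group S] : ∀ t, Group (K15 S t)
  | true => inferInstanceAs (Group S)
  | false => inferInstanceAs (Group (ULift (Multiplicative ℤ)))

open scoped Classical in
private noncomputable def blk15 {ι : Type*} {H : Type*} {G : ι → Type*} [Group H]
    [∀ i, Group (G i)] (φ : ∀ i, H →* G i) (i j : ι) (a : G i) (b : G j) (S : Subgroup (G i)) :
    (Σ t, K15 ↥S t) → List (Σ k, G k)
  | ⟨true, s⟩ =>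
      if hs : (s : G i) ∈ (φ i).range then
        [⟨i, a⁻¹⟩, ⟨j, b⁻¹ * φ j (MonoidHom.mem_range.mp hs).choose * b⟩, ⟨i, a⟩]
      else [⟨i, a⁻¹⟩, ⟨j, b⁻¹⟩, ⟨i, (s : G i)⟩, ⟨j, b⟩, ⟨i, a⟩]
  | ⟨false, n⟩ => [⟨j, b ^ (Multiplicative.toAdd n.down)⟩]

section
variable {ι : Type*} {H : Type*} {G : ι → Type*} [Group H]
    [∀ i, Group (G i)] (φ : ∀ i, H →* G i) (i j : ι) (a : G i) (b : G j) (S : Subgroup (G i))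

private theorem blk15_ne_nil (p : Σ t, K15 ↥S t) : blk15 φ i j a b S p ≠ [] := by
  obtain ⟨t, v⟩ := p
  cases t <;> simp [blk15] <;> split_ifs <;> simp

private theorem blk15_head (p : Σ t, K15 ↥S t) :
    (blk15 φ i j a b S p).head?.map Sigma.fst = some (cond p.1 i j) := by
  obtain ⟨t, v⟩ := p
  cases t <;> simp [blk15] <;> split_ifs <;> simp

private theorem blk15_last (p : Σ t, K15 ↥S t) :
    (blk15 φ i j a b S p).getLast?.map Sigma.fst = some (cond p.1 i j) := by
  obtain ⟨t, v⟩ := p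
  cases t <;> simp [blk15] <;> split_ifs <;> simp

private theorem blk15_chain (hij : i ≠ j) (p : Σ t, K15 ↥S t) :
    (blk15 φ i j a b S p).Chain' (fun q r => q.1 ≠ r.1) := by
  obtain ⟨t, v⟩ := p
  cases t <;> simp [blk15, List.Chain'] <;> split_ifs <;> simp [hij, Ne.symm hij]

end

section
variable {ι : Type*} {H : Type*} {G : ι → Type*} [Group H]
    [∀ i, Group (G i)] (φ : ∀ i, H →* G i) {i j : ι} (a : G i) (b : G j) (S : Subgroup (G i))

private theorem blk15_red (hφ : ∀ i, Function.Injective (φ i))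
    (ha : a ∉ (φ i).range)
    (hb : ∀ k : ℤ, k ≠ 0 → b ^ k ∉ (φ j).range)
    (hmal : ∀ x : G j, x ∉ (φ j).range →
      ∀ h : G j, h ∈ (φ j).range → h ≠ 1 → x⁻¹ * h * x ∉ (φ j).range)
    (p : Σ t, K15 ↥S t) (hp : p.2 ≠ 1) :
    ∀ q ∈ blk15 φ i j a b S p, q.2 ∉ (φ q.1).range := by
  have hbr : b ∉ (φ j).range := by simpa using hb 1 one_ne_zero
  obtain ⟨t, v⟩ := p
  cases t
  · -- false
    have hv : Multiplicative.toAdd v.down ≠ 0 := by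
      intro h
      exact hp (ULift.ext _ _ (toAdd_eq_zero.mp h))
    intro q hq
    simp only [blk15, List.mem_singleton] at hq
    subst hq
    exact hb _ hv
  · -- true
    have hv1 : (v : G i) ≠ 1 := by
      simpa using fun h => hp (Subtype.ext h)
    intro q hq
    simp only [blk15] at hq
    split_ifs at hq with hs
    · have hspec := (MonoidHom.mem_range.mp hs).choose_spec
      set h := (MonoidHom.mem_range.mp hs).choose with hh
      have hne1 : φ j h ≠ 1 := by
        intro hcon
        have : h = 1 := hφ j (by simpa using hcon)
        rw [this] at hspec
        simp at hspec
        exact hv1 hspec.symm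
      simp only [List.mem_cons, List.mem_singleton, List.not_mem_nil, or_false] at hq
      rcases hq with rfl | rfl | rfl
      · simpa [inv_mem_iff] using ha
      · exact hmal b hbr (φ j h) ⟨h, rfl⟩ hne1
      · exact ha
    · simp only [List.mem_cons, List.mem_singleton, List.not_mem_nil, or_false] at hq
      rcases hq with rfl | rfl | rfl | rfl | rfl
      · simpa [inv_mem_iff] using ha
      · simpa [inv_mem_iff] using hbr
      · exact hs
      · exact hbr
      · exact ha
end

private def F15 {P S : Type*} [Monoid P] [Group S] (f : S →* P) (g : Multiplicative ℤ →* P) :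
    ∀ t, K15 S t →* P
  | true => f
  | false => g.comp MulEquiv.ulift.toMonoidHom

private def e15 {S : Type*} [Group S] : Coprod S (Multiplicative ℤ) →* CoprodI (K15 S) :=
  Coprod.lift (CoprodI.of (M := K15 S) (i := true))
    ((CoprodI.of (M := K15 S) (i := false)).comp MulEquiv.ulift.symm.toMonoidHom)

private def r15 {S : Type*} [Group S] : CoprodI (K15 S) →* Coprod S (Multiplicative ℤ) :=
  CoprodI.lift fun t => match t with
    | true => Coprod.inl
    | false => Coprod.inr.comp MulEquiv.ulift.toMonoidHom

private theorem r15_e15 {S : Type*} [Group S] (x : Coprod S (Multiplicative ℤ)) :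
    r15 (e15 x) = x := by
  have : (r15 (S := S)).comp e15 = MonoidHom.id _ := by
    apply Coprod.hom_ext <;> apply MonoidHom.ext <;> intro y <;>
      simp [e15, r15, CoprodI.lift_of]
  exact DFunLike.congr_fun this x

private theorem liftF_e15 {P S : Type*} [Monoid P] [Group S] (f : S →* P)
    (g : Multiplicative ℤ →* P) :
    (CoprodI.lift (F15 f g)).comp e15 = Coprod.lift f g := by
  apply Coprod.hom_ext <;> apply MonoidHom.ext <;> intro y <;>
    simp [e15, F15, CoprodI.lift_of]

section
variable {ι : Type*} {H : Type*} {G : ι → Type*} [Group H]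
    [∀ i, Group (G i)] (φ : ∀ i, H →* G i) {i j : ι} (a : G i) (b : G j) (S : Subgroup (G i))

private theorem blk15_prod (p : Σ t, K15 ↥S t) :
    ((blk15 φ i j a b S p).map fun q => PushoutI.of (φ := φ) q.1 q.2).prod
      = F15 ((MulAut.conj ((PushoutI.of (φ := φ) j b * PushoutI.of (φ := φ) i a)⁻¹)).toMonoidHom.comp
          ((PushoutI.of (φ := φ) i).comp S.subtype))
        (zpowersHom (PushoutI φ) (PushoutI.of (φ := φ) j b)) p.1 p.2 := by
  obtain ⟨t, v⟩ := p
  cases t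
  · simp only [blk15, F15, List.map_cons, List.map_nil, List.prod_cons, List.prod_nil, mul_one,
      MonoidHom.comp_apply, MulEquiv.coe_toMonoidHom, zpowersHom_apply, map_zpow]
    rfl
  · simp only [blk15]
    split_ifs with hs
    · have hspec := (MonoidHom.mem_range.mp hs).choose_spec
      set h := (MonoidHom.mem_range.mp hs).choose with hh
      have hmid : PushoutI.of (φ := φ) j (b⁻¹ * φ j h * b)
          = (PushoutI.of (φ := φ) j b)⁻¹ * PushoutI.of (φ := φ) i (v : G i)
            * PushoutI.of (φ := φ) j b := by
        rw [map_mul, map_mul, map_inv, PushoutI.of_apply_eq_base,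
          ← PushoutI.of_apply_eq_base φ i, hspec]
      simp only [List.map_cons, List.map_nil, List.prod_cons, List.prod_nil, hmid, F15,
        MonoidHom.comp_apply, MulEquiv.coe_toMonoidHom, MulAut.conj_apply, Subgroup.coe_subtype,
        map_inv, mul_inv_rev, inv_inv, mul_one]
      group
    · simp only [List.map_cons, List.map_nil, List.prod_cons, List.prod_nil, F15,
        MonoidHom.comp_apply, MulEquiv.coe_toMonoidHom, MulAut.conj_apply, Subgroup.coe_subtype,
        map_inv, mul_inv_rev, inv_inv, mul_one]
      group
end

section
variable {ι : Type*} {H : Type*} {G : ι → Type*} [Group H]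
    [∀ i, Group (G i)] (φ : ∀ i, H →* G i) {i j : ι} {a : G i} {b : G j} {S : Subgroup (G i)}

private theorem key15 (hφ : ∀ i, Function.Injective (φ i)) (hij : i ≠ j)
    (ha : a ∉ (φ i).range)
    (hb : ∀ k : ℤ, k ≠ 0 → b ^ k ∉ (φ j).range)
    (hmal : ∀ x : G j, x ∉ (φ j).range →
      ∀ h : G j, h ∈ (φ j).range → h ≠ 1 → x⁻¹ * h * x ∉ (φ j).range)
    (w : CoprodI.Word (K15 ↥S)) (hw : w.toList ≠ []) :
    CoprodI.lift (F15
      ((MulAut.conj ((PushoutI.of (φ := φ) j b * PushoutI.of (φ := φ) i a)⁻¹)).toMonoidHom.comp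
          ((PushoutI.of (φ := φ) i).comp S.subtype))
      (zpowersHom (PushoutI φ) (PushoutI.of (φ := φ) j b))) w.prod ≠ 1 := by
  set L : List (List (Σ k, G k)) := w.toList.map (blk15 φ i j a b S) with hL
  have hnil : [] ∉ L := by
    intro hmem
    rw [hL, List.mem_map] at hmem
    obtain ⟨p, _, hp⟩ := hmem
    exact blk15_ne_nil φ i j a b S p hp
  have hlne : L.flatten ≠ [] := by
    obtain ⟨p, hp⟩ := List.exists_mem_of_ne_nil _ hw
    intro hfl
    rw [List.flatten_eq_nil_iff] at hfl
    exact blk15_ne_nil φ i j a b S p (hfl _ (List.mem_map_of_mem hp))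
  have hred : ∀ q ∈ L.flatten, q.2 ∉ (φ q.1).range := by
    intro q hq
    rw [List.mem_flatten] at hq
    obtain ⟨bl, hbl, hqbl⟩ := hq
    rw [hL, List.mem_map] at hbl
    obtain ⟨p, hpw, rfl⟩ := hbl
    exact blk15_red φ a b S hφ ha hb hmal p (w.ne_one p hpw) q hqbl
  have hchain : L.flatten.Chain' (fun p q => p.1 ≠ q.1) := by
    refine (List.isChain_flatten hnil).mpr ?_
    constructor
    · intro bl hbl
      rw [hL, List.mem_map] at hbl
      obtain ⟨p, _, rfl⟩ := hbl
      exact blk15_chain φ i j a b S hij p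
    · rw [hL, List.isChain_map]
      refine w.chain_ne.imp ?_
      intro p q hpq x hx y hy
      have hx1 : x.1 = cond p.1 i j := by
        have := blk15_last φ i j a b S p
        rw [hx] at this
        simpa using this
      have hy1 : y.1 = cond q.1 i j := by
        have := blk15_head φ i j a b S q
        rw [hy] at this
        simpa using this
      rw [hx1, hy1]
      cases hp : p.1 <;> cases hq : q.1 <;> simp_all [hij, Ne.symm hij]
  have hprod : (L.flatten.map fun q => PushoutI.of (φ := φ) q.1 q.2).prod
      = CoprodI.lift (F15
          ((MulAut.conj ((PushoutI.of (φ := φ) j b * PushoutI.of (φ := φ) i a)⁻¹)).toMonoidHom.comp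
            ((PushoutI.of (φ := φ) i).comp S.subtype))
          (zpowersHom (PushoutI φ) (PushoutI.of (φ := φ) j b))) w.prod := by
    rw [List.map_flatten, List.prod_flatten, hL, List.map_map, List.map_map]
    show (w.toList.map fun p =>
        ((blk15 φ i j a b S p).map fun q => PushoutI.of (φ := φ) q.1 q.2).prod).prod = _
    rw [show CoprodI.Word.prod w = List.prod (w.toList.map fun p => CoprodI.of p.snd) from rfl,
      map_list_prod, List.map_map]
    refine congrArg List.prod (List.map_congr_left fun p hp => ?_)
    rw [blk15_prod]
    exact (CoprodI.lift_of _ _).symm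
  rw [← hprod]
  exact aux_reduced_prod_ne_one φ hφ _ hlne hred hchain
end

/-- Let `G = A *_H B` be an amalgamated free product (formalized as the pushout of
injective maps `φ i : H →* G i`, with `A = G i`, `B = G j`, `i ≠ j`). Let `a ∈ A \ H` and
let `b ∈ B` satisfy `bᵏ ∉ H` for all nonzero integers `k`, with `H` malnormal in `B`.
Then for any subgroup `S ≤ A`, the subgroup of `G` generated by `(ba)⁻¹S(ba)` and `b` is
isomorphic to the free product `S * ⟨b⟩ ≅ S * ℤ`, i.e. the canonical homomorphism
`S ∗ ℤ →* G` sending `s ↦ (ba)⁻¹s(ba)` and the generator of `ℤ` to `b` is injective. -/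
theorem stmt_15 {ι : Type*} {H : Type*} {G : ι → Type*} [Group H] [∀ i, Group (G i)]
    (φ : ∀ i, H →* G i) (hφ : ∀ i, Function.Injective (φ i))
    (i j : ι) (hij : i ≠ j)
    (a : G i) (ha : a ∉ (φ i).range)
    (b : G j) (hb : ∀ k : ℤ, k ≠ 0 → b ^ k ∉ (φ j).range)
    (hmal : ∀ x : G j, x ∉ (φ j).range →
      ∀ h : G j, h ∈ (φ j).range → h ≠ 1 → x⁻¹ * h * x ∉ (φ j).range)
    (S : Subgroup (G i)) :
    Function.Injective ⇑(Monoid.Coprod.lift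
      ((MulAut.conj ((PushoutI.of (φ := φ) j b * PushoutI.of (φ := φ) i a)⁻¹)).toMonoidHom.comp
        ((PushoutI.of (φ := φ) i).comp S.subtype))
      (zpowersHom (PushoutI φ) (PushoutI.of (φ := φ) j b))) := by
  classical
  set f := ((MulAut.conj ((PushoutI.of (φ := φ) j b * PushoutI.of (φ := φ) i a)⁻¹)).toMonoidHom.comp
      ((PushoutI.of (φ := φ) i).comp S.subtype)) with hfdef
  set g := zpowersHom (PushoutI φ) (PushoutI.of (φ := φ) j b) with hgdef
  rw [injective_iff_map_eq_one]
  intro x hx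
  have hEx : CoprodI.lift (F15 f g) (e15 x) = 1 := by
    rw [← hx]
    exact DFunLike.congr_fun (liftF_e15 f g) x
  set w : CoprodI.Word (K15 ↥S) := CoprodI.Word.equiv (e15 x) with hwdef
  have hwprod : w.prod = e15 x := CoprodI.Word.equiv.symm_apply_apply (e15 x)
  by_cases hnil : w.toList = []
  · have hex1 : e15 x = 1 := by
      rw [← hwprod]
      show List.prod (w.toList.map fun p => CoprodI.of p.snd) = 1
      rw [hnil]
      simp
    have := r15_e15 x
    rw [hex1, map_one] at this
    exact this.symm
  · exact absurd (hwprod ▸ hEx) (key15 φ hφ hij ha hb hmal w hnil)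
end
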